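/- arXiv:2110.10683 — 7 statements merged into one kernel-verified Lean document; each statement's English description precedes it below -/
import Mathlib

section
/- Let K be a non-archimedean local field, and let V and W be topological K-vector spaces whose topologies are metrizable and complete. Let f : V → W be a continuous, open, surjective K-linear map. Then every compact subset H of W is the image under f of some compact subset of V; that is, there exists a compact set Q ⊆ V with f(Q) = H. -/
/-- A non-archimedean local field: a field equipped with a (nontrivial) norm which is
ultrametric, with respect to which it is complete, whose norm takes values in a discrete
set `q ^ ℤ` on nonzero elements (so the valuation is discrete), and whose residue field
(the unit ball modulo the open unit ball) is finite. -/
def IsNonarchLocalField (K : Type*) [NontriviallyNormedField K] : Prop :=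
  (∀ x y : K, ‖x + y‖ ≤ max ‖x‖ ‖y‖) ∧
  CompleteSpace K ∧
  (∃ q : ℝ, 1 < q ∧ ∀ x : K, x ≠ 0 → ∃ n : ℤ, ‖x‖ = q ^ n) ∧
  (∃ R : Finset K, ∀ x : K, ‖x‖ ≤ 1 → ∃ r ∈ R, ‖x - r‖ < 1)

open Filter Set Topology Pointwise

/-- Every compact subset of the target of a continuous, open, surjective linear map between
complete metrizable topological vector spaces over a non-archimedean local field is the
image of a compact subset of the source. -/
theorem compact_image_of_isOpenMap_of_surjective
    (K : Type*) [NontriviallyNormedField K] (hK : IsNonarchLocalField K)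
    (V W : Type*)
    [AddCommGroup V] [Module K V] [UniformSpace V] [IsUniformAddGroup V]
    [ContinuousSMul K V] [CompleteSpace V] [TopologicalSpace.MetrizableSpace V]
    [AddCommGroup W] [Module K W] [UniformSpace W] [IsUniformAddGroup W]
    [ContinuousSMul K W] [CompleteSpace W] [TopologicalSpace.MetrizableSpace W]
    (f : V →ₗ[K] W) (hcont : Continuous f) (hopen : IsOpenMap f)
    (hsurj : Function.Surjective f)
    (H : Set W) (hH : IsCompact H) :
    ∃ Q : Set V, IsCompact Q ∧ f '' Q = H := by
  classical
  clear hK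
  have f0 : f 0 = 0 := map_zero f
  obtain ⟨B, hB⟩ := (𝓝 (0 : V)).exists_antitone_basis
  obtain ⟨O, hO⟩ := (𝓝 (0 : W)).exists_antitone_basis
  have hBmem : ∀ n, B n ∈ 𝓝 (0 : V) := fun n => hB.1.mem_of_mem trivial
  have hOmem : ∀ n, O n ∈ 𝓝 (0 : W) := fun n => hO.1.mem_of_mem trivial
  -- symmetric halving neighborhoods
  have hhalf : ∀ s : Set V, s ∈ 𝓝 (0 : V) → ∃ u, u ∈ 𝓝 (0 : V) ∧
      (∀ x ∈ u, -x ∈ u) ∧ u + u ⊆ s := by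
    intro s hs
    obtain ⟨w, hw, hww⟩ := exists_nhds_zero_half hs
    have hnegw : (fun x : V => -x) ⁻¹' w ∈ 𝓝 (0 : V) := by
      apply continuous_neg.continuousAt.preimage_mem_nhds
      simpa using hw
    refine ⟨w ∩ (fun x : V => -x) ⁻¹' w, Filter.inter_mem hw hnegw, ?_, ?_⟩
    · rintro x ⟨h1, h2⟩
      exact ⟨h2, by simpa using h1⟩
    · rw [Set.add_subset_iff]
      rintro a ⟨ha, -⟩ b ⟨hb, -⟩
      exact hww a ha b hb
  choose! D hD1 hD2 hD3 using hhalf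
  set U : ℕ → Set V := fun n => Nat.rec (D (B 0)) (fun n Un => D (Un ∩ B (n + 1))) n with hUdef
  have hU0 : U 0 = D (B 0) := rfl
  have hUs : ∀ n, U (n + 1) = D (U n ∩ B (n + 1)) := fun n => rfl
  have hUP : ∀ n, U n ∈ 𝓝 (0 : V) ∧ (∀ x ∈ U n, -x ∈ U n) ∧ U n ⊆ B n := by
    intro n
    induction n with
    | zero =>
      have h1 := hD1 (B 0) (hBmem 0)
      have h2 := hD2 (B 0) (hBmem 0)
      have h3 := hD3 (B 0) (hBmem 0)
      rw [← hU0] at h1 h2 h3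
      have h0 : (0 : V) ∈ U 0 := mem_of_mem_nhds h1
      refine ⟨h1, h2, fun x hx => ?_⟩
      simpa using h3 (Set.add_mem_add hx h0)
    | succ n ih =>
      have hmem : U n ∩ B (n + 1) ∈ 𝓝 (0 : V) := Filter.inter_mem ih.1 (hBmem (n + 1))
      have h1 := hD1 _ hmem
      have h2 := hD2 _ hmem
      have h3 := hD3 _ hmem
      rw [← hUs n] at h1 h2 h3
      have h0 : (0 : V) ∈ U (n + 1) := mem_of_mem_nhds h1
      refine ⟨h1, h2, fun x hx => ?_⟩
      have := h3 (Set.add_mem_add hx h0)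
      simpa using this.2
  have hUadd : ∀ n, U (n + 1) + U (n + 1) ⊆ U n := by
    intro n
    have hmem : U n ∩ B (n + 1) ∈ 𝓝 (0 : V) := Filter.inter_mem (hUP n).1 (hBmem (n + 1))
    have h3 := hD3 _ hmem
    rw [← hUs n] at h3
    exact h3.trans Set.inter_subset_left
  have hUanti : Antitone U := by
    apply antitone_nat_of_succ_le
    intro n x hx
    have h0 : (0 : V) ∈ U (n + 1) := mem_of_mem_nhds (hUP (n + 1)).1
    simpa using hUadd n (Set.add_mem_add hx h0)
  have hUsmall : ∀ s ∈ 𝓝 (0 : V), ∃ n, U n ⊆ s := by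
    intro s hs
    obtain ⟨n, -, hn⟩ := hB.1.mem_iff.mp hs
    exact ⟨n, (hUP n).2.2.trans hn⟩
  have hclU : ∀ n, closure (U (n + 1)) ⊆ U n := by
    intro n x hx
    have hN : (fun y : V => y - x) ⁻¹' U (n + 1) ∈ 𝓝 x := by
      apply (continuous_id.sub continuous_const).continuousAt.preimage_mem_nhds
      simpa using (hUP (n + 1)).1
    obtain ⟨y, hy1, hy2⟩ := mem_closure_iff_nhds.mp hx _ hN
    have hmem : y + -(y - x) ∈ U n :=
      hUadd n (Set.add_mem_add hy2 ((hUP (n + 1)).2.1 _ hy1))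
    simpa [sub_eq_add_neg] using hmem
  -- closed neighborhoods G n of 0 in W, inside f '' U (n+1) and O n
  have hGex : ∀ n : ℕ, ∃ g : Set W, g ∈ 𝓝 (0 : W) ∧ IsClosed g ∧
      g ⊆ f '' U (n + 1) ∧ g ⊆ O n := by
    intro n
    have h1 : f '' U (n + 1) ∈ 𝓝 (0 : W) := by
      have := hopen.image_mem_nhds (hUP (n + 1)).1
      rwa [f0] at this
    obtain ⟨g, hg, hgc, hgs⟩ :=
      exists_mem_nhds_isClosed_subset (Filter.inter_mem h1 (hOmem n))
    exact ⟨g, hg, hgc, hgs.trans Set.inter_subset_left, hgs.trans Set.inter_subset_right⟩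
  choose G hG1 hG2 hG3 hG4 using hGex
  have nbhd : ∀ (k : W) (n : ℕ), (fun x => x - k) ⁻¹' G n ∈ 𝓝 k := by
    intro k n
    apply (continuous_id.sub continuous_const).continuousAt.preimage_mem_nhds
    simpa using hG1 n
  choose v hv using hsurj
  -- base finite set
  have base : ∃ T : Set V, T.Finite ∧ ∀ k ∈ H, ∃ t ∈ T, k - f t ∈ G 0 := by
    obtain ⟨F, hF1, hF2⟩ := hH.elim_nhds_subcover (fun k => (fun x => x - k) ⁻¹' G 0)
      (fun k _ => nbhd k 0)
    refine ⟨v '' (F : Set W), F.finite_toSet.image v, fun k hk => ?_⟩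
    obtain ⟨k', hk'F, hk'⟩ := Set.mem_iUnion₂.mp (hF2 hk)
    exact ⟨v k', Set.mem_image_of_mem _ hk'F, by rwa [hv k']⟩
  -- inductive step
  have step : ∀ (n : ℕ) (T : Set V), T.Finite → (∀ k ∈ H, ∃ t ∈ T, k - f t ∈ G n) →
      ∃ T' : Set V, T'.Finite ∧ ∀ k ∈ H, ∀ t ∈ T, k - f t ∈ G n →
        ∃ t' ∈ T', t' - t ∈ U (n + 1) ∧ k - f t' ∈ G (n + 1) := by
    intro n T hTfin _
    have hScomp : ∀ t : V, IsCompact (H ∩ (fun k => k - f t) ⁻¹' G n) := fun t =>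
      hH.inter_right ((hG2 n).preimage (continuous_id.sub continuous_const))
    have hcov : ∀ t : V, ∃ F : Finset W, (∀ k ∈ F, k ∈ H ∩ (fun k => k - f t) ⁻¹' G n) ∧
        (H ∩ (fun k => k - f t) ⁻¹' G n) ⊆ ⋃ k ∈ F, (fun x => x - k) ⁻¹' G (n + 1) := fun t =>
      (hScomp t).elim_nhds_subcover (fun k => (fun x => x - k) ⁻¹' G (n + 1))
        (fun k _ => nbhd k (n + 1))
    choose F hF1 hF2 using hcov
    have hu : ∀ (t : V), ∀ k ∈ F t, ∃ u ∈ U (n + 1), f u = k - f t := by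
      intro t k hk
      obtain ⟨u, hu1, hu2⟩ := hG3 n (hF1 t k hk).2
      exact ⟨u, hu1, hu2⟩
    choose! u hu1 hu2 using hu
    refine ⟨⋃ t ∈ T, (fun k => t + u t k) '' (F t : Set W),
      hTfin.biUnion (fun t _ => ((F t).finite_toSet.image _)), ?_⟩
    intro k hk t ht hGn
    obtain ⟨k', hk'F, hk'⟩ := Set.mem_iUnion₂.mp (hF2 t ⟨hk, hGn⟩)
    have hfval : f (t + u t k') = k' := by
      rw [map_add, hu2 t k' hk'F]; abel
    refine ⟨t + u t k', Set.mem_biUnion ht (Set.mem_image_of_mem _ hk'F),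
      by simpa using hu1 t k' hk'F, ?_⟩
    rw [hfval]
    exact hk'
  choose! T' hT'fin hT'link using step
  obtain ⟨T0, hT0fin, hT0good⟩ := base
  set Tseq : ℕ → Set V := fun n => Nat.rec T0 (fun n Tn => T' n Tn) n with hTseqdef
  have hTs : ∀ n, Tseq (n + 1) = T' n (Tseq n) := fun n => rfl
  have hTgood : ∀ n, (Tseq n).Finite ∧ ∀ k ∈ H, ∃ t ∈ Tseq n, k - f t ∈ G n := by
    intro n
    induction n with
    | zero => exact ⟨hT0fin, hT0good⟩
    | succ n ih =>
      have hfin := hT'fin n (Tseq n) ih.1 ih.2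
      have hlink := hT'link n (Tseq n) ih.1 ih.2
      rw [← hTs n] at hfin hlink
      refine ⟨hfin, fun k hk => ?_⟩
      obtain ⟨t, ht, htG⟩ := ih.2 k hk
      obtain ⟨t', ht', -, h3⟩ := hlink k hk t ht htG
      exact ⟨t', ht', h3⟩
  have hlink : ∀ (n : ℕ) (k : W), k ∈ H → ∀ t ∈ Tseq n, k - f t ∈ G n →
      ∃ t' ∈ Tseq (n + 1), t' - t ∈ U (n + 1) ∧ k - f t' ∈ G (n + 1) := by
    intro n k hk t ht htG
    have := hT'link n (Tseq n) (hTgood n).1 (hTgood n).2 k hk t ht htG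
    rwa [← hTs n] at this
  -- for each k in H, a lift q of k approximated by Tseq
  have main : ∀ k ∈ H, ∃ q : V, f q = k ∧ ∀ n, ∃ x ∈ Tseq n, q - x ∈ closure (U n) := by
    intro k hk
    have key : ∀ (n : ℕ) (x : V), x ∈ Tseq n ∧ k - f x ∈ G n →
        ∃ x', (x' ∈ Tseq (n + 1) ∧ k - f x' ∈ G (n + 1)) ∧ x' - x ∈ U (n + 1) := by
      intro n x ⟨hx1, hx2⟩
      obtain ⟨x', h1, h2, h3⟩ := hlink n k hk x hx1 hx2
      exact ⟨x', ⟨h1, h3⟩, h2⟩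
    choose! nxt hnxt using key
    obtain ⟨t0, ht0, hg0⟩ := (hTgood 0).2 k hk
    set t : ℕ → V := fun n => Nat.rec t0 (fun n x => nxt n x) n with htdef
    have inv : ∀ n, t n ∈ Tseq n ∧ k - f (t n) ∈ G n := by
      intro n
      induction n with
      | zero => exact ⟨ht0, hg0⟩
      | succ n ih => exact (hnxt n (t n) ih).1
    have hdiff : ∀ n, t (n + 1) - t n ∈ U (n + 1) := fun n => (hnxt n (t n) (inv n)).2
    have hjump : ∀ (j n : ℕ), t (n + j) - t n ∈ U n := by
      intro j
      induction j with
      | zero => intro n; simpa using mem_of_mem_nhds (hUP n).1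
      | succ j ih =>
        intro n
        have h1 : t (n + 1 + j) - t (n + 1) ∈ U (n + 1) := ih (n + 1)
        have h2 : t (n + 1) - t n ∈ U (n + 1) := hdiff n
        have h3 := hUadd n (Set.add_mem_add h1 h2)
        have heq : n + (j + 1) = n + 1 + j := by omega
        rw [heq]
        simpa [sub_add_sub_cancel] using h3
    have hjump' : ∀ (m n : ℕ), n ≤ m → t m - t n ∈ U n := by
      intro m n hnm
      obtain ⟨j, rfl⟩ := Nat.exists_eq_add_of_le hnm
      exact hjump j n
    have hcauchy : CauchySeq t := by
      rw [cauchySeq_iff]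
      intro s hs
      rw [uniformity_eq_comap_nhds_zero V] at hs
      obtain ⟨S, hS, hsub⟩ := hs
      obtain ⟨N, hN⟩ := hUsmall S hS
      refine ⟨N, fun m hm l hl => ?_⟩
      apply hsub
      show t l - t m ∈ S
      rcases le_total m l with h | h
      · exact hN (hUanti hm (hjump' l m h))
      · have := hjump' m l h
        have hneg := (hUP l).2.1 _ this
        simp only [neg_sub] at hneg
        exact hN (hUanti hl hneg)
    obtain ⟨q, hq⟩ := cauchySeq_tendsto_of_complete hcauchy
    refine ⟨q, ?_, ?_⟩
    · have h1 : Tendsto (fun n => f (t n)) atTop (𝓝 (f q)) := (hcont.tendsto q).comp hq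
      have h3 : Tendsto (fun n => k - f (t n)) atTop (𝓝 0) := by
        rw [hO.1.tendsto_right_iff]
        intro i _
        filter_upwards [Filter.eventually_ge_atTop i] with n hn
        exact hO.2 hn (hG4 n (inv n).2)
      have h2 : Tendsto (fun n => f (t n)) atTop (𝓝 k) := by
        have : Tendsto (fun n => k - (k - f (t n))) atTop (𝓝 (k - 0)) := tendsto_const_nhds.sub h3
        simpa using this
      exact tendsto_nhds_unique h1 h2
    · intro n
      refine ⟨t n, (inv n).1, ?_⟩
      apply mem_closure_of_tendsto (hq.sub_const (t n))
      filter_upwards [Filter.eventually_ge_atTop n] with m hm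
      exact hjump' m n hm
  choose! g hg1 hg2 using main
  have hQ0tb : TotallyBounded (g '' H) := by
    rw [totallyBounded_iff_subset_finite_iUnion_nhds_zero]
    intro S hS
    obtain ⟨m, hm⟩ := hUsmall S hS
    refine ⟨Tseq (m + 1), (hTgood (m + 1)).1, ?_⟩
    rintro _ ⟨k, hk, rfl⟩
    obtain ⟨x, hx, hcl⟩ := hg2 k hk (m + 1)
    refine Set.mem_iUnion₂.2 ⟨x, hx, ?_⟩
    refine Set.mem_vadd_set.2 ⟨g k - x, hm (hclU m hcl), ?_⟩
    simp [vadd_eq_add]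
  have hQ0c : IsCompact (closure (g '' H)) :=
    TotallyBounded.isCompact_of_isClosed hQ0tb.closure isClosed_closure
  refine ⟨closure (g '' H) ∩ f ⁻¹' H, ?_, ?_⟩
  · exact hQ0c.of_isClosed_subset
      (isClosed_closure.inter (hH.isClosed.preimage hcont)) Set.inter_subset_left
  · apply Set.Subset.antisymm
    · rintro _ ⟨x, ⟨-, hxH⟩, rfl⟩
      exact hxH
    · intro k hk
      refine ⟨g k, ⟨subset_closure (Set.mem_image_of_mem g hk), ?_⟩, hg1 k hk⟩
      simp only [Set.mem_preimage, hg1 k hk]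
      exact hk
end

section
/- Let K be a non-archimedean local field, let V and W be topological K-vector spaces whose topologies are metrizable and complete, and let f : V → W be a continuous, open, surjective K-linear map. Let S be an extremally disconnected compact Hausdorff topological space. Then for every continuous map ψ : S → W there exists a continuous map ψ̃ : S → V with f ∘ ψ̃ = ψ. In particular, the map C⁰(S, V) → C⁰(S, W) given by post-composition with f is surjective. -/
open Filter Set Topology

/-- Selection lemma: given a continuous map `g` from a compact, t2, totally disconnected
space into a topological abelian group `W`, all of whose values lie in `fm '' M`, and an
open neighborhood `T` of `0`, there is a locally constant (hence continuous) map `h` into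
`M` such that `g s - fm (h s) ∈ T` for all `s`. -/
theorem exists_locally_constant_selection
    {V W S : Type*} [TopologicalSpace V] [TopologicalSpace W] [TopologicalSpace S]
    [CompactSpace S] [TotallyDisconnectedSpace S] [T2Space S]
    [AddCommGroup W] [IsTopologicalAddGroup W]
    (fm : V → W) (T : Set W) (hTo : IsOpen T) (hT0 : (0:W) ∈ T)
    (M : Set V) (g : S → W) (hg : Continuous g) (hmem : ∀ s, g s ∈ fm '' M) :
    ∃ h : S → V, Continuous h ∧ (∀ s, h s ∈ M) ∧ ∀ s, g s - fm (h s) ∈ T := by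
  classical
  cases isEmpty_or_nonempty S with
  | inl hS => exact ⟨fun s => isEmptyElim s, continuous_iff_continuousAt.2 fun x => isEmptyElim x,
      fun s => isEmptyElim s, fun s => isEmptyElim s⟩
  | inr hS =>
  choose v hvM hvf using hmem
  set A : S → Set S := fun s => g ⁻¹' ((fun w => w - g s) ⁻¹' T) with hA
  have hAo : ∀ s, IsOpen (A s) :=
    fun s => ((hTo.preimage (continuous_id.sub continuous_const)).preimage hg)
  have hAs : ∀ s, s ∈ A s := by intro s; simp [hA, hT0]
  have hclopen : ∀ s : S, ∃ C : Set S, IsClopen C ∧ s ∈ C ∧ C ⊆ A s :=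
    fun s => compact_exists_isClopen_in_isOpen (hAo s) (hAs s)
  choose C hCclopen hCs hCA using hclopen
  obtain ⟨t, ht⟩ := isCompact_univ.elim_finite_subcover C (fun s => (hCclopen s).isOpen)
    (fun x _ => mem_iUnion.2 ⟨x, hCs x⟩)
  set l : List S := t.toList with hl
  set D : ℕ → Set S := fun n => if hn : n < l.length then C (l.get ⟨n, hn⟩) else ∅ with hD
  have hDclopen : ∀ n, IsClopen (D n) := by
    intro n
    simp only [hD]
    split
    · exact hCclopen _
    · exact isClopen_empty
  have ex : ∀ x : S, ∃ n, x ∈ D n := by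
    intro x
    obtain ⟨s, hst, hxs⟩ := mem_iUnion₂.1 (ht (mem_univ x))
    have hsl : s ∈ l := by simpa [hl] using hst
    obtain ⟨n, hn⟩ := List.mem_iff_get.1 hsl
    refine ⟨n.1, ?_⟩
    have hDn : D n.1 = C (l.get n) := by rw [hD]; exact dif_pos n.2
    rw [hDn, hn]
    exact hxs
  set idx : S → ℕ := fun x => Nat.find (ex x) with hidx
  have hidx_mem : ∀ x, x ∈ D (idx x) := fun x => Nat.find_spec (ex x)
  have hidx_lt : ∀ x, idx x < l.length := by
    intro x
    by_contra hlt
    have := hidx_mem x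
    simp only [hD, dif_neg hlt] at this
    exact this
  set val : ℕ → V := fun n => if hn : n < l.length then v (l.get ⟨n, hn⟩)
    else v (Classical.arbitrary S) with hval
  refine ⟨fun x => val (idx x), ?_, ?_, ?_⟩
  · have hlc : IsLocallyConstant idx := by
      rw [IsLocallyConstant.iff_eventually_eq]
      intro x
      set O : Set S := D (idx x) ∩ ⋂ j ∈ Finset.range (idx x), (D j)ᶜ with hO
      have hOopen : IsOpen O :=
        ((hDclopen _).isOpen).inter
          (isOpen_biInter_finset fun j _ => (hDclopen j).isClosed.isOpen_compl)
      have hxO : x ∈ O := by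
        refine ⟨hidx_mem x, ?_⟩
        simp only [mem_iInter, Finset.mem_range, mem_compl_iff]
        exact fun j hj => Nat.find_min (ex x) hj
      filter_upwards [hOopen.mem_nhds hxO] with y hy
      obtain ⟨hy1, hy2⟩ := hy
      simp only [mem_iInter, Finset.mem_range, mem_compl_iff] at hy2
      exact (Nat.find_eq_iff (ex y)).2 ⟨hy1, fun j hj => hy2 j hj⟩
    exact (hlc.comp val).continuous
  · intro x
    have h1 := hidx_mem x
    simp only [hval, hidx_lt x, dif_pos]
    exact hvM _
  · intro x
    have h1 := hidx_mem x
    have hlt := hidx_lt x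
    simp only [hD, dif_pos hlt] at h1
    have h2 := hCA _ h1
    simp only [hA, mem_preimage] at h2
    simp only [hval, hlt, dif_pos]
    rw [hvf (l.get ⟨idx x, hlt⟩)]
    exact h2





/-- Continuous maps from an extremally disconnected compact Hausdorff space to the target of
a continuous, open, surjective linear map between complete metrizable topological vector
spaces over a non-archimedean local field lift along the map; in particular the induced map
`C⁰(S, V) → C⁰(S, W)` is surjective. -/
theorem continuousMap_lift_of_isOpenMap_of_surjective
    (K : Type*) [NontriviallyNormedField K] (hK : IsNonarchLocalField K)
    (V W : Type*)
    [AddCommGroup V] [Module K V] [UniformSpace V] [IsUniformAddGroup V]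
    [ContinuousSMul K V] [CompleteSpace V] [TopologicalSpace.MetrizableSpace V]
    [AddCommGroup W] [Module K W] [UniformSpace W] [IsUniformAddGroup W]
    [ContinuousSMul K W] [CompleteSpace W] [TopologicalSpace.MetrizableSpace W]
    (f : V →ₗ[K] W) (hcont : Continuous f) (hopen : IsOpenMap f)
    (hsurj : Function.Surjective f)
    (S : Type*) [TopologicalSpace S] [CompactSpace S] [T2Space S]
    [ExtremallyDisconnected S] :
    (∀ ψ : C(S, W), ∃ ψlift : C(S, V), ∀ s : S, f (ψlift s) = ψ s) ∧
    Function.Surjective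
      (fun φ : C(S, V) => (ContinuousMap.mk (⇑f) hcont).comp φ) := by
  classical
  have main : ∀ ψ : C(S, W), ∃ ψlift : C(S, V), ∀ s : S, f (ψlift s) = ψ s := by
    intro ψ

    classical
    obtain ⟨aV, haV⟩ := (𝓝 (0:V)).exists_antitone_basis
    obtain ⟨bW, hbW⟩ := (𝓝 (0:W)).exists_antitone_basis
    -- construction of the fundamental sequence of neighborhoods of 0 in V
    have key : ∀ P : Set V, P ∈ 𝓝 0 → ∀ n : ℕ, ∃ A : Set V,
        A ∈ 𝓝 0 ∧ (∀ x ∈ A, -x ∈ A) ∧ (∀ x ∈ A, ∀ y ∈ A, x + y ∈ P) ∧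
        closure A ⊆ aV n ∧ ∀ x ∈ A, f x ∈ bW n := by
      intro P hP n
      obtain ⟨B, hB, hBsplit⟩ := exists_nhds_zero_half hP
      obtain ⟨c, hc, hcc, hca⟩ :=
        exists_mem_nhds_isClosed_subset (haV.toHasBasis.mem_of_mem (i := n) trivial)
      set D : Set V := B ∩ c ∩ f ⁻¹' (bW n) with hD
      have hDnhds : D ∈ 𝓝 0 := by
        refine inter_mem (inter_mem hB hc) ?_
        have : bW n ∈ 𝓝 (f 0) := by
          rw [map_zero]; exact hbW.toHasBasis.mem_of_mem (i := n) trivial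
        exact hcont.continuousAt.preimage_mem_nhds this
      have hnegD : (fun x : V => -x) ⁻¹' D ∈ 𝓝 0 := by
        have : D ∈ 𝓝 (-(0:V)) := by rwa [neg_zero]
        exact continuous_neg.continuousAt.preimage_mem_nhds this
      refine ⟨D ∩ (fun x : V => -x) ⁻¹' D, inter_mem hDnhds hnegD, ?_, ?_, ?_, ?_⟩
      · rintro x ⟨hx1, hx2⟩
        exact ⟨hx2, by simpa using hx1⟩
      · rintro x ⟨⟨⟨hx, -⟩, -⟩, -⟩ y ⟨⟨⟨hy, -⟩, -⟩, -⟩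
        exact hBsplit x hx y hy
      · refine subset_trans (closure_mono (fun x hx => hx.1.1.2)) ?_
        rw [hcc.closure_eq]
        exact hca
      · rintro x ⟨⟨-, hx⟩, -⟩
        exact hx
    choose! F hF1 hF2 hF3 hF4 hF5 using key
    set U : ℕ → Set V := fun n => Nat.rec (F univ 0) (fun n Un => F Un (n+1)) n with hU
    have hUnhds : ∀ n, U n ∈ 𝓝 0 := by
      intro n
      induction n with
      | zero => exact hF1 univ univ_mem 0
      | succ n ih => exact hF1 (U n) ih (n+1)
    have hUsym : ∀ n, ∀ x ∈ U n, -x ∈ U n := by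
      intro n
      cases n with
      | zero => exact hF2 univ univ_mem 0
      | succ n => exact hF2 (U n) (hUnhds n) (n+1)
    have hUadd : ∀ n, ∀ x ∈ U (n+1), ∀ y ∈ U (n+1), x + y ∈ U n :=
      fun n => hF3 (U n) (hUnhds n) (n+1)
    have hUclos : ∀ n, closure (U n) ⊆ aV n := by
      intro n
      cases n with
      | zero => exact hF4 univ univ_mem 0
      | succ n => exact hF4 (U n) (hUnhds n) (n+1)
    have hUf : ∀ n, ∀ x ∈ U n, f x ∈ bW n := by
      intro n
      cases n with
      | zero => exact hF5 univ univ_mem 0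
      | succ n => exact hF5 (U n) (hUnhds n) (n+1)
    have hU0mem : ∀ n, (0:V) ∈ U n := fun n => mem_of_mem_nhds (hUnhds n)
    have hUanti : ∀ n, U (n+1) ⊆ U n := by
      intro n x hx
      simpa using hUadd n x hx 0 (hU0mem (n+1))
    have hUle : ∀ k m, k ≤ m → U m ⊆ U k := by
      intro k m hkm
      induction m with
      | zero => rw [Nat.le_zero.1 hkm]
      | succ m ih =>
        rcases Nat.lt_or_ge k (m+1) with h | h
        · exact (hUanti m).trans (ih (Nat.lt_succ_iff.1 h))
        · rw [Nat.le_antisymm hkm h]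
    have hUsub : ∀ n, U n ⊆ aV n := fun n => subset_closure.trans (hUclos n)
    have hfU : ∀ n, f '' U n ∈ 𝓝 (0:W) := by
      intro n
      have := hopen.image_mem_nhds (hUnhds n)
      rwa [map_zero] at this
    -- the inductive step
    have step : ∀ (n : ℕ) (M : Set V) (g : S → W), Continuous g → (∀ s, g s ∈ f '' M) →
        ∃ h : S → V, Continuous h ∧ (∀ s, h s ∈ M) ∧ ∀ s, g s - f (h s) ∈ f '' U n := by
      intro n M g hgc hgm
      obtain ⟨h, hc, hM, hT⟩ := exists_locally_constant_selection f (interior (f '' U n))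
        isOpen_interior (mem_interior_iff_mem_nhds.2 (hfU n)) M g hgc hgm
      exact ⟨h, hc, hM, fun s => interior_subset (hT s)⟩
    obtain ⟨h₀, h₀c, -, h₀p⟩ := step 0 univ ψ ψ.continuous
      (fun s => by simpa [Set.image_univ, hsurj.range_eq] using mem_univ (ψ s))
    have build : ∀ (n : ℕ) (g : S → W), Continuous g → (∀ s, g s ∈ f '' U n) →
        ∃ h : S → V, Continuous h ∧ (∀ s, h s ∈ U n) ∧ ∀ s, g s - f (h s) ∈ f '' U (n+1) :=
      fun n g hgc hgm => step (n+1) (U n) g hgc hgm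
    choose! hf hfc hfm hfp using build
    set g : ℕ → S → W := fun n => Nat.rec (fun s => ψ s - f (h₀ s))
      (fun n gn => fun s => gn s - f (hf n gn s)) n with hgdef
    set h : ℕ → S → V := fun n => hf n (g n) with hhdef
    have hgsucc : ∀ n s, g (n+1) s = g n s - f (h n s) := fun n s => rfl
    have hg : ∀ n, Continuous (g n) ∧ ∀ s, g n s ∈ f '' U n := by
      intro n
      induction n with
      | zero => exact ⟨ψ.continuous.sub (hcont.comp h₀c), h₀p⟩
      | succ n ih =>
        have hc' : Continuous (h n) := hfc n (g n) ih.1 ih.2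
        exact ⟨ih.1.sub (hcont.comp hc'), fun s => hfp n (g n) ih.1 ih.2 s⟩
    have hhc : ∀ n, Continuous (h n) := fun n => hfc n (g n) (hg n).1 (hg n).2
    have hhm : ∀ n s, h n s ∈ U n := fun n => hfm n (g n) (hg n).1 (hg n).2
    set Φ : ℕ → S → V := fun N s => h₀ s + ∑ k ∈ Finset.range N, h k s with hΦ
    have hΦc : ∀ N, Continuous (Φ N) :=
      fun N => h₀c.add (continuous_finset_sum _ fun k _ => hhc k)
    have hΦsucc : ∀ N s, Φ (N+1) s = Φ N s + h N s := by
      intro N s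
      simp [hΦ, Finset.sum_range_succ, add_assoc]
    have hΦf : ∀ N s, f (Φ N s) = ψ s - g N s := by
      intro N
      induction N with
      | zero =>
        intro s
        simp only [hΦ, Finset.range_zero, Finset.sum_empty, add_zero]
        have : g 0 s = ψ s - f (h₀ s) := rfl
        rw [this]
        abel
      | succ N ih =>
        intro s
        rw [hΦsucc N s, map_add, ih s, hgsucc N s]
        abel
    have hdiff : ∀ d m s, Φ (m+1+d) s - Φ (m+1) s ∈ U m := by
      intro d
      induction d with
      | zero => intro m s; simpa using hU0mem m
      | succ d ih =>
        intro m s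
        have e1 : Φ (m+1+(d+1)) s - Φ (m+1) s
            = (Φ (m+2+d) s - Φ (m+2) s) + h (m+1) s := by
          have : m+1+(d+1) = m+2+d := by omega
          rw [this, hΦsucc (m+1) s]
          abel
        rw [e1]
        exact hUadd m _ (ih (m+1) s) _ (hhm (m+1) s)
    have hdiff' : ∀ k m n s, k + 1 ≤ m → m ≤ n → Φ n s - Φ m s ∈ U k := by
      intro k m n s hm hmn
      obtain ⟨d, rfl⟩ := Nat.exists_eq_add_of_le hmn
      obtain ⟨e, rfl⟩ := Nat.exists_eq_add_of_le hm
      have : k + 1 + e = k + e + 1 := by omega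
      rw [this]
      exact hUle k (k+e) (Nat.le_add_right k e) (hdiff d (k+e) s)
    have hcauchy : ∀ s, CauchySeq (fun N => Φ N s) := by
      intro s
      rw [cauchySeq_iff]
      intro E hE
      rw [uniformity_eq_comap_nhds_zero V] at hE
      obtain ⟨A, hA, hAE⟩ := hE
      obtain ⟨k, -, hk⟩ := haV.toHasBasis.mem_iff.1 hA
      refine ⟨k+1, fun m hm n hn => hAE ?_⟩
      show Φ n s - Φ m s ∈ A
      rcases le_total m n with hmn | hnm
      · exact hk ((hUsub k) (hdiff' k m n s hm hmn))
      · have := hUsym k _ (hdiff' k n m s hn hnm)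
        rw [neg_sub] at this
        exact hk ((hUsub k) this)
    have hlim : ∀ s, ∃ x, Tendsto (fun N => Φ N s) atTop (𝓝 x) :=
      fun s => cauchySeq_tendsto_of_complete (hcauchy s)
    choose σ hσ using hlim
    have hTU : TendstoUniformly Φ σ atTop := by
      intro E hE
      rw [uniformity_eq_comap_nhds_zero V] at hE
      obtain ⟨A, hA, hAE⟩ := hE
      obtain ⟨k, -, hk⟩ := haV.toHasBasis.mem_iff.1 hA
      filter_upwards [eventually_ge_atTop (k+1)] with N hN s
      refine hAE ?_
      show Φ N s - σ s ∈ A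
      have htd : Tendsto (fun n => Φ N s - Φ n s) atTop (𝓝 (Φ N s - σ s)) :=
        tendsto_const_nhds.sub (hσ s)
      have hmem : ∀ᶠ n in atTop, Φ N s - Φ n s ∈ U k := by
        filter_upwards [eventually_ge_atTop N] with n hn
        have := hUsym k _ (hdiff' k N n s hN hn)
        rwa [neg_sub] at this
      exact hk (hUclos k (mem_closure_of_tendsto htd hmem))
    have hσc : Continuous σ := hTU.continuous (Eventually.of_forall hΦc).frequently
    refine ⟨⟨σ, hσc⟩, fun s => ?_⟩
    have h1 : Tendsto (fun N => f (Φ N s)) atTop (𝓝 (f (σ s))) :=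
      (hcont.tendsto _).comp (hσ s)
    have hg0 : Tendsto (fun N => g N s) atTop (𝓝 (0:W)) := by
      intro B hB
      obtain ⟨k, -, hk⟩ := hbW.toHasBasis.mem_iff.1 hB
      rw [Filter.mem_map]
      filter_upwards [eventually_ge_atTop k] with N hN
      obtain ⟨x, hx, hfx⟩ := (hg N).2 s
      have : g N s ∈ bW N := hfx ▸ hUf N x hx
      exact hk (hbW.antitone hN this)
    have h2 : Tendsto (fun N => f (Φ N s)) atTop (𝓝 (ψ s)) := by
      have := (tendsto_const_nhds (x := ψ s) (f := atTop)).sub hg0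
      rw [sub_zero] at this
      convert this using 2 with N
      exact hΦf N _
    exact tendsto_nhds_unique h1 h2
  refine ⟨main, fun ψ => ?_⟩
  obtain ⟨φ, hφ⟩ := main ψ
  exact ⟨φ, ContinuousMap.ext fun s => hφ s⟩
end

section
/- Let K be a non-archimedean local field. Let (Vⁿ, dⁿ)_{n ∈ ℤ} be a cochain complex of K-Fréchet spaces (complete metrizable topological K-vector spaces) with continuous K-linear differentials dⁿ : Vⁿ → V^{n+1}, d^{n+1} ∘ dⁿ = 0, which is exact as a complex of K-vector spaces (ker dⁿ = range d^{n-1} for all n). Then for every extremally disconnected compact Hausdorff topological space S, the cochain complex (C⁰(S, Vⁿ))_{n ∈ ℤ}, with differentials given by post-composition with dⁿ, is exact. -/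
open Filter Set Topology TopologicalSpace Uniformity Pointwise

lemma exists_clopen_nbhd {S : Type*} [TopologicalSpace S] [CompactSpace S] [T2Space S]
    [ExtremallyDisconnected S] {s : S} {O : Set S} (hO : O ∈ 𝓝 s) :
    ∃ C : Set S, IsClopen C ∧ s ∈ C ∧ C ⊆ O := by
  obtain ⟨C, hCmem, hCclosed, hCO⟩ := exists_mem_nhds_isClosed_subset hO
  refine ⟨closure (interior C),
    ⟨isClosed_closure, ExtremallyDisconnected.open_closure _ isOpen_interior⟩, ?_, ?_⟩
  · exact subset_closure (mem_interior_iff_mem_nhds.2 hCmem)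
  · exact (closure_minimal interior_subset hCclosed).trans hCO

lemma exists_glue {S E : Type*} [TopologicalSpace S] [TopologicalSpace E] (z : E)
    (P : S → E → Prop) :
    ∀ L : List (Set S × E), (∀ p ∈ L, IsClopen p.1) → (∀ p ∈ L, ∀ t ∈ p.1, P t p.2) →
      ∃ u : S → E, Continuous u ∧ ∀ t, (∃ p ∈ L, t ∈ p.1) → P t (u t) := by
  intro L
  induction L with
  | nil => exact fun _ _ => ⟨fun _ => z, continuous_const, by simp⟩
  | cons p L ih =>
    intro hcl hP
    obtain ⟨u, hu, hPu⟩ := ih (fun q hq => hcl q (List.mem_cons_of_mem _ hq))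
      (fun q hq => hP q (List.mem_cons_of_mem _ hq))
    classical
    refine ⟨p.1.piecewise (fun _ => p.2) u, ?_, ?_⟩
    · refine Continuous.piecewise ?_ continuous_const hu
      intro a ha
      rw [(hcl p (List.mem_cons_self)).frontier_eq] at ha
      exact absurd ha (notMem_empty a)
    · intro t ht
      by_cases htp : t ∈ p.1
      · rw [Set.piecewise_eq_of_mem _ _ _ htp]
        exact hP p (List.mem_cons_self) t htp
      · rw [Set.piecewise_eq_of_notMem _ _ _ htp]
        refine hPu t ?_
        obtain ⟨q, hq, htq⟩ := ht
        rcases List.mem_cons.1 hq with rfl | hq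
        · exact absurd htq htp
        · exact ⟨q, hq, htq⟩


theorem claimA_lemma {K : Type*} [NontriviallyNormedField K]
    {E F : Type*} [AddCommGroup E] [Module K E]
    [UniformSpace E] [IsUniformAddGroup E] [ContinuousSMul K E]
    [AddCommGroup F] [Module K F]
    [UniformSpace F] [IsUniformAddGroup F] [ContinuousSMul K F]
    [CompleteSpace F] [MetrizableSpace F]
    (f : E →L[K] F) (M : Submodule K F) (hM : IsClosed (M : Set F))
    (hrange : ∀ y : F, y ∈ M ↔ ∃ x, f x = y) :
    ∀ U ∈ 𝓝 (0 : E), ∃ W ∈ 𝓝 (0 : F), ∀ z ∈ M, z ∈ W → z ∈ closure (f '' U) := by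
  haveI : CompleteSpace M := hM.completeSpace_coe
  haveI : (𝓤 F).IsCountablyGenerated := IsUniformAddGroup.uniformity_countably_generated
  haveI : (𝓤 M).IsCountablyGenerated := by
    rw [uniformity_subtype]; infer_instance
  intro U hU
  -- a symmetric-ish neighborhood V1 with differences in U
  obtain ⟨V, hV, hVU⟩ := exists_nhds_zero_half hU
  have hnegV : (fun x : E => -x) ⁻¹' V ∈ 𝓝 (0 : E) := by
    refine ContinuousAt.preimage_mem_nhds (continuous_neg.continuousAt) ?_
    rwa [neg_zero]
  set V1 : Set E := V ∩ (fun x : E => -x) ⁻¹' V with hV1def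
  have hV1 : V1 ∈ 𝓝 (0 : E) := inter_mem hV hnegV
  have hV1sub : ∀ v ∈ V1, ∀ w ∈ V1, v - w ∈ U := by
    intro v hv w hw
    have := hVU v hv.1 (-w) hw.2
    simpa [sub_eq_add_neg] using this
  obtain ⟨c, hc⟩ := NormedField.exists_one_lt_norm K
  have hc0 : c ≠ 0 := by
    intro h; rw [h, norm_zero] at hc; linarith
  -- the closed sets
  set A : ℕ → Set M := fun n => {m : M | (m : F) ∈ closure (f '' ((c ^ n) • V1))} with hAdef
  have hAclosed : ∀ n, IsClosed (A n) :=
    fun n => isClosed_closure.preimage continuous_subtype_val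
  have hAcover : ⋃ n, A n = univ := by
    refine eq_univ_of_forall fun m => mem_iUnion.2 ?_
    obtain ⟨x, hx⟩ := (hrange m).1 m.2
    have htend : Tendsto (fun n : ℕ => (c⁻¹) ^ n • x) atTop (𝓝 (0 : E)) := by
      have h1 : Tendsto (fun n : ℕ => (c⁻¹) ^ n) atTop (𝓝 (0 : K)) := by
        apply tendsto_pow_atTop_nhds_zero_of_norm_lt_one
        rw [norm_inv]
        rw [inv_lt_one_iff₀]
        right; exact hc
      have := h1.smul_const x
      simpa using this
    obtain ⟨n, hn⟩ := (htend.eventually_mem hV1).exists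
    refine ⟨n, ?_⟩
    have hxmem : x ∈ (c ^ n) • V1 := by
      refine ⟨(c⁻¹) ^ n • x, hn, ?_⟩
      show c ^ n • (c⁻¹ ^ n • x) = x
      rw [smul_smul, ← mul_pow, mul_inv_cancel₀ hc0, one_pow, one_smul]
    exact subset_closure ⟨x, hxmem, hx⟩
  haveI : Nonempty M := ⟨0⟩
  obtain ⟨n, ⟨y0, hy0⟩⟩ := nonempty_interior_of_iUnion_of_closed hAclosed hAcover
  set a : K := c ^ n with hadef
  have ha0 : a ≠ 0 := pow_ne_zero _ hc0
  -- extract a neighborhood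
  have hy0nhds : A n ∈ 𝓝 y0 := mem_interior_iff_mem_nhds.1 hy0
  rw [nhds_subtype, mem_comap] at hy0nhds
  obtain ⟨N, hN, hNsub⟩ := hy0nhds
  have hy0A : (y0 : F) ∈ closure (f '' (a • V1)) :=
    hNsub (show (y0:F) ∈ N from mem_of_mem_nhds hN)
  -- W0
  set W0 : Set F := (fun w : F => (y0 : F) + w) ⁻¹' N with hW0def
  have hW0 : W0 ∈ 𝓝 (0 : F) := by
    refine ContinuousAt.preimage_mem_nhds ((continuous_const.add continuous_id).continuousAt) ?_
    simpa using hN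
  have hsubtr : ∀ z : F, z ∈ M → z ∈ W0 → z ∈ closure (f '' (a • U)) := by
    intro z hzM hzW0
    have h1 : (y0 : F) + z ∈ closure (f '' (a • V1)) := by
      have : ((⟨(y0 : F) + z, M.add_mem y0.2 hzM⟩ : M) : F) ∈ closure (f '' (a • V1)) :=
        hNsub (by exact hzW0)
      exact this
    have h2 : ((y0 : F) + z) - (y0 : F) ∈ closure (f '' (a • U)) := by
      refine map_mem_closure₂ (f := fun p q : F => p - q) continuous_sub h1 hy0A ?_
      rintro p ⟨xp, ⟨vp, hvp, rfl⟩, rfl⟩ q ⟨xq, ⟨vq, hvq, rfl⟩, rfl⟩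
      refine ⟨a • vp - a • vq, ?_, by rw [map_sub]⟩
      rw [← smul_sub]
      exact smul_mem_smul_set (hV1sub vp hvp vq hvq)
    simpa using h2
  -- final W
  refine ⟨(fun z : F => a • z) ⁻¹' W0, ?_, ?_⟩
  · refine ContinuousAt.preimage_mem_nhds ((continuous_const_smul a).continuousAt) ?_
    simpa [smul_zero] using hW0
  · intro z hzM hzW
    have haz : a • z ∈ closure (f '' (a • U)) := hsubtr _ (M.smul_mem a hzM) hzW
    have hmaps : MapsTo (fun w : F => a⁻¹ • w) (⇑f '' (a • U)) (⇑f '' U) := by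
      rintro w ⟨x, ⟨u, hu, rfl⟩, rfl⟩
      refine ⟨u, hu, ?_⟩
      show f u = a⁻¹ • f (a • u)
      rw [← map_smul, inv_smul_smul₀ ha0]
    have := map_mem_closure (continuous_const_smul a⁻¹) haz hmaps
    simpa [inv_smul_smul₀ ha0] using this


theorem key_lift {K : Type*} [NontriviallyNormedField K]
    {E F : Type*} [AddCommGroup E] [Module K E]
    [UniformSpace E] [IsUniformAddGroup E] [ContinuousSMul K E]
    [CompleteSpace E] [MetrizableSpace E]
    [AddCommGroup F] [Module K F]
    [UniformSpace F] [IsUniformAddGroup F] [ContinuousSMul K F]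
    [CompleteSpace F] [MetrizableSpace F]
    (f : E →L[K] F) (M : Submodule K F) (hM : IsClosed (M : Set F))
    (hrange : ∀ y : F, y ∈ M ↔ ∃ x, f x = y)
    {S : Type*} [TopologicalSpace S] [CompactSpace S] [T2Space S] [ExtremallyDisconnected S]
    (g : C(S, F)) (hg : ∀ s, g s ∈ M) :
    ∃ h : C(S, E), ∀ s, f (h s) = g s := by
  classical
  have claimA := claimA_lemma f M hM hrange
  obtain ⟨B, hB⟩ := (𝓝 (0 : E)).exists_antitone_basis
  have hstep : ∀ N, N ∈ 𝓝 (0:E) → ∃ V ∈ 𝓝 (0:E), ∀ v ∈ V, ∀ w ∈ V, v + w ∈ N :=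
    fun N hN => exists_nhds_zero_half hN
  choose! Vh hVh1 hVh2 using hstep
  set U : ℕ → Set E := fun k =>
    Nat.rec univ (fun k Uk => Vh (Uk ∩ B k)) k with hUdef
  have hU0 : U 0 = univ := rfl
  have hUsucc : ∀ k, U (k+1) = Vh (U k ∩ B k) := fun k => rfl
  have hBmem : ∀ k, B k ∈ 𝓝 (0:E) := fun k => hB.toHasBasis.mem_of_mem trivial
  have hUnhds : ∀ k, U k ∈ 𝓝 (0:E) := by
    intro k
    induction k with
    | zero => exact univ_mem
    | succ k ih =>
      rw [hUsucc]
      exact hVh1 _ (inter_mem ih (hBmem k))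
  have hUadd : ∀ k, ∀ v ∈ U (k+1), ∀ w ∈ U (k+1), v + w ∈ U k ∩ B k := by
    intro k v hv w hw
    rw [hUsucc] at hv hw
    exact hVh2 _ (inter_mem (hUnhds k) (hBmem k)) v hv w hw
  have hUsub : ∀ k, U (k+1) ⊆ U k ∩ B k := by
    intro k v hv
    have := hUadd k v hv 0 (mem_of_mem_nhds (hUnhds (k+1)))
    simpa using this
  have hUmono : ∀ j k : ℕ, j ≤ k → U k ⊆ U j := by
    intro j k hjk
    induction k, hjk using Nat.le_induction with
    | base => exact subset_rfl
    | succ k hk ih => exact fun x hx => ih ((hUsub k hx).1)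
  choose W hW hWsub using fun k => claimA (U k) (hUnhds k)
  -- smallness of sums
  have hsmall : ∀ N, N ∈ 𝓝 (0:E) → ∃ k0, ∀ k, k0 ≤ k → ∀ v ∈ U k, ∀ w ∈ U k, v + w ∈ N := by
    intro N hN
    obtain ⟨j, -, hj⟩ := hB.toHasBasis.mem_iff.1 hN
    refine ⟨j + 2, fun k hk v hv w hw => ?_⟩
    have h1 : U k ⊆ U (j + 2) := hUmono _ _ hk
    have h2 := hUadd (j+1) v (h1 hv) w (h1 hw)
    exact hj (hB.antitone (Nat.le_succ j) h2.2)
  -- base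
  have base : Continuous (fun _ : S => (0:E)) ∧
      ∀ s, g s - f ((fun _ : S => (0:E)) s) ∈ closure (⇑f '' U 0) := by
    refine ⟨continuous_const, fun s => ?_⟩
    obtain ⟨x, hx⟩ := (hrange (g s)).1 (hg s)
    refine subset_closure ⟨x, ?_, ?_⟩
    · rw [hU0]; exact mem_univ x
    · simp [hx]
  -- step
  have step : ∀ (k : ℕ) (u : S → E),
      (Continuous u ∧ ∀ s, g s - f (u s) ∈ closure (⇑f '' U k)) →
      ∃ u', (Continuous u' ∧ ∀ s, g s - f (u' s) ∈ closure (⇑f '' U (k+1))) ∧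
        ∀ s, u' s - u s ∈ U k := by
    intro k u hu
    obtain ⟨W'', hW''nhds, hW''add⟩ := exists_nhds_zero_half (hW (k+1))
    set e : S → F := fun s => g s - f (u s) with hedef
    have he : Continuous e := g.continuous.sub (f.continuous.comp hu.1)
    have heM : ∀ s, e s ∈ M := fun s => M.sub_mem (hg s) ((hrange _).2 ⟨u s, rfl⟩)
    have hpoint : ∀ s : S, ∃ (x : E) (C : Set S), x ∈ U k ∧ IsClopen C ∧ s ∈ C ∧
        ∀ t ∈ C, e t - f x ∈ W (k+1) := by
      intro s
      have hN : {y : F | e s - y ∈ W''} ∈ 𝓝 (e s) := by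
        refine ContinuousAt.preimage_mem_nhds
          ((continuous_const.sub continuous_id).continuousAt) ?_
        simpa using hW''nhds
      obtain ⟨y, hyN, x, hxU, rfl⟩ := (mem_closure_iff_nhds.1 (hu.2 s)) _ hN
      have hO : {t : S | e t - e s ∈ W''} ∈ 𝓝 s := by
        refine ContinuousAt.preimage_mem_nhds
          ((he.sub continuous_const).continuousAt) ?_
        simpa using hW''nhds
      obtain ⟨C, hCclopen, hsC, hCO⟩ := exists_clopen_nbhd hO
      refine ⟨x, C, hxU, hCclopen, hsC, fun t ht => ?_⟩
      have h1 : e t - e s ∈ W'' := hCO ht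
      have := hW''add _ h1 _ hyN
      simpa [sub_add_sub_cancel] using this
    choose xs Cs hxsU hCclopen hsCs hCs using hpoint
    have hcover : (univ : Set S) ⊆ ⋃ s : S, Cs s := fun t _ => mem_iUnion.2 ⟨t, hsCs t⟩
    obtain ⟨T, hT⟩ := isCompact_univ.elim_finite_subcover Cs (fun s => (hCclopen s).2) hcover
    set L : List (Set S × E) := T.toList.map (fun s => (Cs s, xs s)) with hL
    have hLcl : ∀ p ∈ L, IsClopen p.1 := by
      intro p hp
      simp only [hL, List.mem_map] at hp
      obtain ⟨s, -, rfl⟩ := hp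
      exact hCclopen s
    have hLP : ∀ p ∈ L, ∀ t ∈ p.1, (p.2 ∈ U k ∧ e t - f p.2 ∈ W (k+1)) := by
      intro p hp t ht
      simp only [hL, List.mem_map] at hp
      obtain ⟨s, -, rfl⟩ := hp
      exact ⟨hxsU s, hCs s t ht⟩
    obtain ⟨v, hvcont, hv⟩ :=
      exists_glue (0 : E) (fun t x => x ∈ U k ∧ e t - f x ∈ W (k+1)) L hLcl hLP
    have hvall : ∀ t, v t ∈ U k ∧ e t - f (v t) ∈ W (k+1) := by
      intro t
      refine hv t ?_
      have := hT (mem_univ t)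
      simp only [mem_iUnion] at this
      obtain ⟨s, hsT, hts⟩ := this
      exact ⟨(Cs s, xs s), List.mem_map.2 ⟨s, Finset.mem_toList.2 hsT, rfl⟩, hts⟩
    refine ⟨fun t => u t + v t, ⟨hu.1.add hvcont, ?_⟩, ?_⟩
    · intro s
      have h1 : g s - f (u s + v s) = e s - f (v s) := by
        rw [hedef]; simp only [map_add]; abel
      rw [h1]
      exact hWsub (k+1) _ (M.sub_mem (heM s) ((hrange _).2 ⟨v s, rfl⟩)) ((hvall s).2)
    · intro s; simpa using (hvall s).1
  choose! nxt hnxt1 hnxt2 using step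
  set hs : ℕ → S → E := fun k =>
    Nat.rec (motive := fun _ => S → E) (fun _ => (0:E)) (fun k u => nxt k u) k with hhs
  have hsP : ∀ k, Continuous (hs k) ∧ ∀ s, g s - f (hs k s) ∈ closure (⇑f '' U k) := by
    intro k
    induction k with
    | zero => exact base
    | succ k ih => exact hnxt1 k (hs k) ih
  have hsdiff : ∀ k s, hs (k+1) s - hs k s ∈ U k := fun k s => hnxt2 k (hs k) (hsP k) s
  -- telescoping
  have hsum : ∀ (p k : ℕ) (s : S), ∃ v w, v ∈ U k ∧ w ∈ U k ∧
      hs (k + p) s - hs k s = v + w := by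
    intro p
    induction p with
    | zero =>
      intro k s
      exact ⟨0, 0, mem_of_mem_nhds (hUnhds k), mem_of_mem_nhds (hUnhds k), by simp⟩
    | succ p ih =>
      intro k s
      obtain ⟨v, w, hv, hw, hvw⟩ := ih (k+1) s
      refine ⟨v + w, hs (k+1) s - hs k s, (hUadd k v hv w hw).1, hsdiff k s, ?_⟩
      have hidx : k + (p+1) = (k+1) + p := by omega
      rw [hidx]
      have h2 : hs ((k+1) + p) s - hs k s
          = (hs ((k+1)+p) s - hs (k+1) s) + (hs (k+1) s - hs k s) := by abel
      rw [h2, hvw]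
  -- Cauchy
  have hcauchy : ∀ s, CauchySeq (fun k => hs k s) := by
    intro s
    rw [cauchySeq_iff]
    intro Vu hVu
    rw [uniformity_eq_comap_nhds_zero E, mem_comap] at hVu
    obtain ⟨N, hN, hNV⟩ := hVu
    have hNneg : (fun x : E => -x) ⁻¹' N ∈ 𝓝 (0:E) :=
      continuous_neg.continuousAt.preimage_mem_nhds (by simpa using hN)
    obtain ⟨k0, hk0⟩ := hsmall (N ∩ (fun x : E => -x) ⁻¹' N) (inter_mem hN hNneg)
    refine ⟨k0, fun k hk l hl => ?_⟩
    apply hNV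
    show hs l s - hs k s ∈ N
    rcases le_total k l with h | h
    · obtain ⟨p, rfl⟩ := Nat.exists_eq_add_of_le h
      obtain ⟨v, w, hv, hw, hvw⟩ := hsum p k s
      rw [hvw]
      exact (hk0 k hk v hv w hw).1
    · obtain ⟨p, rfl⟩ := Nat.exists_eq_add_of_le h
      obtain ⟨v, w, hv, hw, hvw⟩ := hsum p l s
      have h3 : hs l s - hs (l + p) s = -(v + w) := by rw [← hvw]; abel
      rw [h3]
      exact (hk0 l hl v hv w hw).2
  choose lf hlf using fun s => cauchySeq_tendsto_of_complete (hcauchy s)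
  -- uniform convergence
  have htu : TendstoUniformly (fun k s => hs k s) lf atTop := by
    intro Vu hVu
    rw [uniformity_eq_comap_nhds_zero E, mem_comap] at hVu
    obtain ⟨N, hN, hNV⟩ := hVu
    obtain ⟨N1, hN1mem, hN1closed, hN1sub⟩ := exists_mem_nhds_isClosed_subset hN
    have hN1neg : (fun x : E => -x) ⁻¹' N1 ∈ 𝓝 (0:E) :=
      continuous_neg.continuousAt.preimage_mem_nhds (by simpa using hN1mem)
    obtain ⟨k0, hk0⟩ := hsmall _ hN1neg
    refine eventually_atTop.2 ⟨k0, fun k hk s => ?_⟩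
    apply hNV
    show hs k s - lf s ∈ N
    refine hN1sub ?_
    have htend : Tendsto (fun m => hs k s - hs m s) atTop (𝓝 (hs k s - lf s)) :=
      tendsto_const_nhds.sub (hlf s)
    refine hN1closed.mem_of_tendsto htend ?_
    refine eventually_atTop.2 ⟨k, fun m hm => ?_⟩
    obtain ⟨p, rfl⟩ := Nat.exists_eq_add_of_le hm
    obtain ⟨v, w, hv, hw, hvw⟩ := hsum p k s
    have h3 : hs k s - hs (k + p) s = -(v + w) := by rw [← hvw]; abel
    rw [h3]
    exact hk0 k hk v hv w hw
  have hlfcont : Continuous lf := htu.continuous (Eventually.of_forall fun k => (hsP k).1).frequently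
  refine ⟨⟨lf, hlfcont⟩, fun s => ?_⟩
  have h1 : Tendsto (fun k => f (hs k s)) atTop (𝓝 (f (lf s))) :=
    (f.continuous.tendsto _).comp (hlf s)
  have herr : Tendsto (fun k => g s - f (hs k s)) atTop (𝓝 (0:F)) := by
    rw [tendsto_def]
    intro Nf hNf
    obtain ⟨N1, hN1mem, hN1closed, hN1sub⟩ := exists_mem_nhds_isClosed_subset hNf
    have hpre : ⇑f ⁻¹' N1 ∈ 𝓝 (0:E) :=
      f.continuous.continuousAt.preimage_mem_nhds (by simpa using hN1mem)
    obtain ⟨k0, hk0⟩ := hsmall _ hpre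
    rw [mem_atTop_sets]
    refine ⟨k0, fun k hk => ?_⟩
    show g s - f (hs k s) ∈ Nf
    refine hN1sub ?_
    have hUN : ⇑f '' U k ⊆ N1 := by
      rintro y ⟨x, hx, rfl⟩
      have := hk0 k hk x hx 0 (mem_of_mem_nhds (hUnhds k))
      simpa using this
    exact closure_minimal hUN hN1closed ((hsP k).2 s)
  have h2 : Tendsto (fun k => f (hs k s)) atTop (𝓝 (g s)) := by
    have h4 : Tendsto (fun _ : ℕ => g s) atTop (𝓝 (g s)) := tendsto_const_nhds
    have := h4.sub herr
    simpa using this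
  exact tendsto_nhds_unique h1 h2

/-- If `(Vⁿ, dⁿ)_{n ∈ ℤ}` is an exact cochain complex of `K`-Fréchet spaces (complete
metrizable topological vector spaces over a non-archimedean local field `K`) with continuous
`K`-linear differentials, then for every extremally disconnected compact Hausdorff space `S`
the complex `(C⁰(S, Vⁿ))_{n ∈ ℤ}` (with differentials given by post-composition) is exact. -/
theorem continuousMapComplex_exact_of_exact
    (K : Type*) [NontriviallyNormedField K] (hK : IsNonarchLocalField K)
    (V : ℤ → Type*) [∀ n, AddCommGroup (V n)] [∀ n, Module K (V n)]
    [∀ n, UniformSpace (V n)] [∀ n, IsUniformAddGroup (V n)] [∀ n, ContinuousSMul K (V n)]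
    [∀ n, CompleteSpace (V n)] [∀ n, TopologicalSpace.MetrizableSpace (V n)]
    (d : ∀ n : ℤ, V n →L[K] V (n + 1))
    (hdd : ∀ (n : ℤ) (x : V n), d (n + 1) (d n x) = 0)
    (hexact : ∀ (n : ℤ) (x : V (n + 1)), d (n + 1) x = 0 ↔ ∃ y : V n, d n y = x)
    (S : Type*) [TopologicalSpace S] [CompactSpace S] [T2Space S]
    [ExtremallyDisconnected S] :
    ∀ (n : ℤ) (g : C(S, V (n + 1))),
      (∀ s : S, d (n + 1) (g s) = 0) ↔ ∃ h : C(S, V n), ∀ s : S, d n (h s) = g s := by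
  intro n g
  constructor
  · intro hg0
    have hMclosed : IsClosed ((LinearMap.ker (d (n+1) : V (n+1) →ₗ[K] V (n+1+1)) : Submodule K (V (n+1))) : Set (V (n+1))) :=
      ContinuousLinearMap.isClosed_ker (d (n+1))
    have hrange : ∀ y : V (n+1), y ∈ LinearMap.ker (d (n+1) : V (n+1) →ₗ[K] V (n+1+1)) ↔ ∃ x, d n x = y := by
      intro y
      rw [LinearMap.mem_ker]
      exact hexact n y
    obtain ⟨h, hh⟩ := key_lift (d n) (LinearMap.ker (d (n+1) : V (n+1) →ₗ[K] V (n+1+1))) hMclosed hrange g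
      (fun s => LinearMap.mem_ker.2 (hg0 s))
    exact ⟨h, hh⟩
  · rintro ⟨h, hh⟩ s
    rw [← hh s]
    exact hdd n (h s)
end

section
/- Let K be a non-archimedean local field, and let (V_n)_{n ∈ ℕ} be an inverse system of K-Banach spaces with continuous K-linear transition maps f_n : V_{n+1} → V_n; for m ≥ n write f_{nm} : V_m → V_n for the composite (f_{nn} = id). Assume that for each n ∈ ℕ there exists k ≥ n such that for every m ≥ k the image f_{nm}(V_m) is dense in f_{nk}(V_k) (i.e. f_{nk}(V_k) is contained in the closure of f_{nm}(V_m) in V_n). Then for every extremally disconnected compact Hausdorff topological space S, the map ∏_{n ∈ ℕ} C⁰(S, V_n) → ∏_{n ∈ ℕ} C⁰(S, V_n) sending (g_n)_n to (g_n − f_n ∘ g_{n+1})_n is surjective; equivalently, the derived inverse limit lim¹ of the tower (C⁰(S, V_n))_n of abelian groups vanishes. -/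
open Filter Topology


/-- Locally constant approximate lifting on a profinite space. -/
theorem cml_approx {X : Type*} [TopologicalSpace X] [CompactSpace X] [T2Space X]
    [TotallyDisconnectedSpace X] {E A : Type*} [MetricSpace E] [TopologicalSpace A]
    (φ : A → E) (g : C(X, E)) (hg : ∀ x, g x ∈ closure (Set.range φ))
    {ε : ℝ} (hε : 0 < ε) : ∃ z : C(X, A), ∀ x, dist (g x) (φ (z x)) ≤ ε := by
  classical
  rcases isEmpty_or_nonempty X with hX | hX
  · exact ⟨⟨fun x => isEmptyElim x, by
      rw [continuous_iff_continuousAt]; exact fun x => isEmptyElim x⟩, fun x => isEmptyElim x⟩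
  have hA : Nonempty A := by
    obtain ⟨x0⟩ := hX
    have h1 := hg x0
    rcases Set.eq_empty_or_nonempty (Set.range φ) with he | hne
    · rw [he, closure_empty] at h1; exact absurd h1 (Set.notMem_empty _)
    · exact Set.range_nonempty_iff_nonempty.mp hne
  have step : ∀ x : X, ∃ a : A, dist (g x) (φ a) < ε / 2 := by
    intro x
    obtain ⟨b, ⟨a, rfl⟩, hb⟩ := Metric.mem_closure_iff.mp (hg x) (ε / 2) (by linarith)
    exact ⟨a, hb⟩
  choose av hav using step
  have step2 : ∀ x : X, ∃ Wx : Set X,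
      IsClopen Wx ∧ x ∈ Wx ∧ Wx ⊆ g ⁻¹' Metric.ball (g x) (ε / 2) := fun x =>
    compact_exists_isClopen_in_isOpen (Metric.isOpen_ball.preimage g.continuous)
      (Set.mem_preimage.mpr (Metric.mem_ball_self (by linarith : (0:ℝ) < ε / 2)))
  choose W hWclopen hWmem hWsub using step2
  obtain ⟨t, ht⟩ := isCompact_univ.elim_finite_subcover W (fun x => (hWclopen x).2)
    (fun x _ => Set.mem_iUnion.mpr ⟨x, hWmem x⟩)
  set L := t.toList with hLdef
  set VL : ℕ → Set X := fun i => if h : i < L.length then W (L.get ⟨i, h⟩) else ∅ with hVLdef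
  have hVLclopen : ∀ i, IsClopen (VL i) := by
    intro i
    by_cases h : i < L.length
    · simp only [VL, dif_pos h]; exact hWclopen _
    · simp only [VL, dif_neg h]; exact isClopen_empty
  have hcov : ∀ y : X, ∃ i, y ∈ VL i := by
    intro y
    have hy := ht (Set.mem_univ y)
    rw [Set.mem_iUnion₂] at hy
    obtain ⟨x, hxt, hyx⟩ := hy
    obtain ⟨i, hi⟩ := List.mem_iff_get.mp (Finset.mem_toList.mpr hxt)
    exact ⟨i.1, by simp only [VL]; rw [dif_pos (show i.1 < L.length from i.2)]; exact (congrArg (fun z => y ∈ W z) hi).mpr hyx⟩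
  set idx : X → ℕ := fun y => Nat.find (hcov y) with hidxdef
  have hidx1 : ∀ y, y ∈ VL (idx y) := fun y => Nat.find_spec (hcov y)
  have hidx2 : ∀ y i, i < idx y → y ∉ VL i := fun y i h => Nat.find_min (hcov y) h
  set aL : ℕ → A := fun i => if h : i < L.length then av (L.get ⟨i, h⟩) else Classical.arbitrary A
    with haLdef
  have hconst : IsLocallyConstant (fun y => aL (idx y)) := by
    rw [IsLocallyConstant.iff_exists_open]
    intro y
    refine ⟨VL (idx y) ∩ ⋂ i ∈ Finset.range (idx y), (VL i)ᶜ, ?_, ⟨hidx1 y, ?_⟩, ?_⟩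
    · exact (hVLclopen _).2.inter (isOpen_biInter_finset fun i _ =>
        (hVLclopen i).1.isOpen_compl)
    · simp only [Set.mem_iInter, Finset.mem_range, Set.mem_compl_iff]
      exact fun i hi => hidx2 y i hi
    · rintro y' ⟨h1, h2⟩
      simp only [Set.mem_iInter, Finset.mem_range, Set.mem_compl_iff] at h2
      have e1 : idx y' ≤ idx y := Nat.find_min' (hcov y') h1
      have e2 : ¬ idx y' < idx y := fun hlt => (h2 _ hlt) (hidx1 y')
      have e3 : idx y' = idx y := le_antisymm e1 (not_lt.mp e2)
      rw [e3]
  refine ⟨⟨fun y => aL (idx y), hconst.continuous⟩, ?_⟩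
  intro x
  have hlt : idx x < L.length := by
    by_contra h
    have h1 := hidx1 x
    simp only [VL, dif_neg h] at h1
    exact h1
  have h1 : x ∈ W (L.get ⟨idx x, hlt⟩) := by
    have h2 := hidx1 x
    simpa only [VL, dif_pos hlt] using h2
  have h2 : dist (g x) (g (L.get ⟨idx x, hlt⟩)) < ε / 2 := by
    have h3 := hWsub _ h1
    simpa [Metric.mem_ball] using h3
  have h3 : dist (g (L.get ⟨idx x, hlt⟩)) (φ (av (L.get ⟨idx x, hlt⟩))) < ε / 2 :=
    hav _
  have hz : aL (idx x) = av (L.get ⟨idx x, hlt⟩) := by simp only [aL, dif_pos hlt]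
  have h4 := dist_triangle (g x) (g (L.get ⟨idx x, hlt⟩)) (φ (av (L.get ⟨idx x, hlt⟩)))
  simp only [ContinuousMap.coe_mk, hz]
  linarith


/-- Composition on the left by a continuous linear map (port shim). -/
def ContinuousLinearMap.compLeftContinuousCompact {𝕜 β γ : Type*} [NontriviallyNormedField 𝕜]
    [NormedAddCommGroup β] [NormedSpace 𝕜 β] [NormedAddCommGroup γ] [NormedSpace 𝕜 γ]
    (X : Type*) [TopologicalSpace X] [CompactSpace X] (g : β →L[𝕜] γ) :
    C(X, β) →L[𝕜] C(X, γ) :=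
  g.compLeftContinuous 𝕜 X

theorem ContinuousLinearMap.compLeftContinuousCompact_apply {𝕜 β γ : Type*}
    [NontriviallyNormedField 𝕜]
    [NormedAddCommGroup β] [NormedSpace 𝕜 β] [NormedAddCommGroup γ] [NormedSpace 𝕜 γ]
    {X : Type*} [TopologicalSpace X] [CompactSpace X] (g : β →L[𝕜] γ) (f : C(X, β)) (x : X) :
    g.compLeftContinuousCompact X f x = g (f x) := rfl


theorem cml_tower {K : Type*} [NontriviallyNormedField K] (A : ℕ → Type*)
    [∀ j, NormedAddCommGroup (A j)] [∀ j, NormedSpace K (A j)] [∀ j, CompleteSpace (A j)]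
    (U : ∀ j m : ℕ, A m →L[K] A j)
    (hUid : ∀ j (x : A j), U j j x = x)
    (hUcomp : ∀ (j m p : ℕ), j ≤ m → m ≤ p → ∀ x : A p, U j m (U m p x) = U j p x)
    (happrox : ∀ (m p : ℕ), m + 1 ≤ p → ∀ (t : A (m + 1)) (ε : ℝ), 0 < ε →
      ∃ z : A p, ‖U m (m + 1) t - U m p z‖ ≤ ε)
    (b : ∀ j, A j) :
    ∃ a : ∀ j, A j, ∀ j, a j - U j (j + 1) (a (j + 1)) = b j := by
  classical
  obtain ⟨C, hC1, hCle⟩ : ∃ C : ℕ → ℝ, (∀ m, 1 ≤ C m) ∧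
      ∀ (j m : ℕ), j ≤ m → ‖U j m‖ ≤ C m := by
    refine ⟨fun m => 1 + ∑ j ∈ Finset.range (m + 1), ‖U j m‖, fun m => ?_, fun j m h => ?_⟩
    · have h0 : (0:ℝ) ≤ ∑ j ∈ Finset.range (m + 1), ‖U j m‖ :=
        Finset.sum_nonneg fun _ _ => norm_nonneg _
      dsimp only; linarith
    · have h1 : ‖U j m‖ ≤ ∑ i ∈ Finset.range (m + 1), ‖U i m‖ :=
        Finset.single_le_sum (f := fun i => ‖U i m‖) (fun i _ => norm_nonneg _)
          (Finset.mem_range.mpr (by omega))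
      dsimp only; linarith
  have hCpos : ∀ m, (0:ℝ) < C m := fun m => lt_of_lt_of_le one_pos (hC1 m)
  have hδ : ∀ m : ℕ, (0:ℝ) < (1/2) ^ m / C m := fun m => div_pos (by positivity) (hCpos m)
  have key : ∀ (m : ℕ) (zm : A (m + 1)), ∃ zz : A (m + 2),
      ‖U m (m + 1) (b (m + 1) - zm) + U m (m + 2) zz‖ ≤ (1/2) ^ m / C m := by
    intro m zm
    obtain ⟨zz, hzz⟩ := happrox m (m + 2) (by omega) (zm - b (m + 1)) ((1/2) ^ m / C m) (hδ m)
    refine ⟨zz, ?_⟩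
    have e : U m (m + 1) (b (m + 1) - zm) + U m (m + 2) zz
        = -(U m (m + 1) (zm - b (m + 1)) - U m (m + 2) zz) := by
      rw [map_sub, map_sub]; abel
    rw [e, norm_neg]; exact hzz
  obtain ⟨z, hz⟩ : ∃ z : ∀ m, A m, ∀ m,
      ‖U m (m + 1) (b (m + 1) - z (m + 1)) + U m (m + 2) (z (m + 2))‖ ≤ (1/2) ^ m / C m := by
    refine ⟨fun m => (Nat.rec (motive := fun m => A m × A (m + 1)) ((0 : A 0), (0 : A 1))
      (fun m p => (p.2, (key m p.2).choose)) m).1, fun m => ?_⟩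
    exact (key m _).choose_spec
  have hw : ∀ (j m : ℕ), j ≤ m →
      ‖U j (m + 1) (b (m + 1) - z (m + 1) + U (m + 1) (m + 2) (z (m + 2)))‖ ≤ (1/2) ^ m := by
    intro j m hjm
    have e : U j (m + 1) (b (m + 1) - z (m + 1) + U (m + 1) (m + 2) (z (m + 2)))
        = U j m (U m (m + 1) (b (m + 1) - z (m + 1)) + U m (m + 2) (z (m + 2))) := by
      rw [map_add, map_add, hUcomp j (m + 1) (m + 2) (by omega) (by omega),
        hUcomp j m (m + 1) hjm (by omega), hUcomp j m (m + 2) hjm (by omega)]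
    rw [e]
    refine le_trans ((U j m).le_opNorm _) ?_
    have h2 := hz m
    have h3 := hCle j m hjm
    have h4 : ‖U j m‖ * ‖U m (m + 1) (b (m + 1) - z (m + 1)) + U m (m + 2) (z (m + 2))‖
        ≤ C m * ((1/2) ^ m / C m) :=
      mul_le_mul h3 h2 (norm_nonneg _) (hCpos m).le
    refine le_trans h4 (le_of_eq ?_)
    rw [mul_comm, div_mul_cancel₀ _ (hCpos m).ne']
  obtain ⟨Q, hQ⟩ : ∃ Q : ∀ j : ℕ, ℕ → A j, ∀ j t, Q j t
      = (∑ i ∈ Finset.Ico j (j + t + 1), U j i (b i)) + U j (j + t + 1) (z (j + t + 1)) :=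
    ⟨fun j t => (∑ i ∈ Finset.Ico j (j + t + 1), U j i (b i)) + U j (j + t + 1) (z (j + t + 1)),
      fun _ _ => rfl⟩
  have hQdiff : ∀ j t, Q j (t + 1) - Q j t
      = U j (j + t + 1) (b (j + t + 1) - z (j + t + 1)
          + U (j + t + 1) (j + t + 2) (z (j + t + 2))) := by
    intro j t
    rw [hQ, hQ]
    have e1 : ∑ i ∈ Finset.Ico j (j + (t + 1) + 1), U j i (b i)
        = (∑ i ∈ Finset.Ico j (j + t + 1), U j i (b i)) + U j (j + t + 1) (b (j + t + 1)) := by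
      rw [show j + (t + 1) + 1 = (j + t + 1) + 1 from by omega]
      exact Finset.sum_Ico_succ_top (by omega) _
    rw [e1, show j + (t + 1) + 1 = j + t + 2 from by omega]
    rw [map_add, map_sub, hUcomp j (j + t + 1) (j + t + 2) (by omega) (by omega)]
    abel
  have hQcauchy : ∀ j, CauchySeq (Q j) := by
    intro j
    refine cauchySeq_of_le_geometric (1/2) ((1/2) ^ j) (by norm_num) (fun t => ?_)
    rw [dist_eq_norm, ← norm_neg, neg_sub, hQdiff j t]
    refine le_trans (hw j (j + t) (by omega)) (le_of_eq ?_)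
    rw [pow_add]
  choose a ha using fun j => cauchySeq_tendsto_of_complete (hQcauchy j)
  refine ⟨a, fun j => ?_⟩
  have key2 : ∀ t, U j (j + 1) (Q (j + 1) t) = Q j (t + 1) - b j := by
    intro t
    rw [hQ, hQ]
    rw [map_add, map_sum]
    have e1 : ∀ i ∈ Finset.Ico (j + 1) (j + 1 + t + 1),
        U j (j + 1) (U (j + 1) i (b i)) = U j i (b i) := fun i hi =>
      hUcomp j (j + 1) i (by omega) (Finset.mem_Ico.mp hi).1 (b i)
    rw [Finset.sum_congr rfl e1, hUcomp j (j + 1) (j + 1 + t + 1) (by omega) (by omega)]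
    rw [show j + 1 + t + 1 = j + (t + 1) + 1 from by omega]
    have e2 : ∑ i ∈ Finset.Ico j (j + (t + 1) + 1), U j i (b i)
        = U j j (b j) + ∑ i ∈ Finset.Ico (j + 1) (j + (t + 1) + 1), U j i (b i) :=
      Finset.sum_eq_sum_Ico_succ_bot (by omega) _
    rw [e2, hUid j (b j)]
    abel
  have T1 : Tendsto (fun t => U j (j + 1) (Q (j + 1) t)) atTop (𝓝 (U j (j + 1) (a (j + 1)))) :=
    ((U j (j + 1)).continuous.tendsto _).comp (ha (j + 1))
  have T2 : Tendsto (fun t => Q j (t + 1) - b j) atTop (𝓝 (a j - b j)) :=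
    Tendsto.sub_const ((ha j).comp (tendsto_add_atTop_nat 1)) (b j)
  simp only [key2] at T1
  have e3 : a j - b j = U j (j + 1) (a (j + 1)) := tendsto_nhds_unique T2 T1
  rw [← e3]
  abel


theorem condensed_mittagLeffler'
    (K : Type*) [NontriviallyNormedField K]
    (V : ℕ → Type*) [∀ n, NormedAddCommGroup (V n)] [∀ n, NormedSpace K (V n)]
    [∀ n, CompleteSpace (V n)]
    (f : ∀ n : ℕ, V (n + 1) →L[K] V n)
    (F : ∀ n m : ℕ, n ≤ m → (V m →L[K] V n))
    (hFid : ∀ n, F n n le_rfl = ContinuousLinearMap.id K (V n))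
    (hFsucc : ∀ (n m : ℕ) (h : n ≤ m),
      F n (m + 1) (h.trans (Nat.le_succ m)) = (F n m h).comp (f m))
    (hML : ∀ n : ℕ, ∃ k : ℕ, ∃ hk : n ≤ k, ∀ (m : ℕ) (hm : k ≤ m),
      Set.range (F n k hk) ⊆ closure (Set.range (F n m (hk.trans hm))))
    (S : Type*) [TopologicalSpace S] [CompactSpace S] [T2Space S]
    [ExtremallyDisconnected S] :
    ∀ y : ∀ n : ℕ, C(S, V n), ∃ g : ∀ n : ℕ, C(S, V n),
      ∀ (n : ℕ) (s : S), g n s - f n (g (n + 1) s) = y n s := by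
  classical
  intro y
  -- composition laws for F
  have Fcomp : ∀ (n m p : ℕ) (h1 : n ≤ m) (h2 : m ≤ p) (x : V p),
      F n m h1 (F m p h2 x) = F n p (h1.trans h2) x := by
    intro n m p h1 h2
    induction p, h2 using Nat.le_induction with
    | base =>
      intro x
      rw [hFid m]
      rfl
    | succ p hp ih =>
      intro x
      rw [hFsucc m p hp, hFsucc n p (h1.trans hp)]
      simp only [ContinuousLinearMap.comp_apply]
      exact ih (f p x)
  have Fsingle : ∀ (n : ℕ) (x : V (n + 1)), F n (n + 1) (Nat.le_succ n) x = f n x := by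
    intro n x
    rw [hFsucc n n le_rfl]
    simp only [ContinuousLinearMap.comp_apply]
    rw [hFid n]
    rfl
  -- Mittag-Leffler data
  choose κ hκ1 hκ2 using hML
  -- the collapsing subsequence ν
  set ν : ℕ → ℕ := fun j => Nat.rec 0 (fun _ p => max (κ p) (p + 1)) j with hνdef
  have hstep : ∀ j, ν (j + 1) = max (κ (ν j)) (ν j + 1) := fun j => rfl
  have hlt : ∀ j, ν j < ν (j + 1) := fun j =>
    lt_of_lt_of_le (Nat.lt_succ_self _) ((hstep j) ▸ le_max_right _ _)
  have hνmono : StrictMono ν := strictMono_nat_of_lt_succ hlt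
  have hκν : ∀ j, κ (ν j) ≤ ν (j + 1) := fun j => (hstep j) ▸ le_max_left _ _
  have hνgt : ∀ n, n < ν (n + 1) := by
    have hself : ∀ j, j ≤ ν j := fun j =>
      Nat.rec (Nat.zero_le _) (fun j ih => Nat.succ_le_of_lt (lt_of_le_of_lt ih (hlt j))) j
    exact fun n => lt_of_lt_of_le (Nat.lt_succ_self n) (hself (n + 1))
  -- transition maps on function spaces
  obtain ⟨E, hE⟩ : ∃ E : ∀ n i : ℕ, C(S, V n), ∀ (n i : ℕ) (h : n ≤ i),
      E n i = (F n i h).compLeftContinuousCompact S (y i) :=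
    ⟨fun n i => if h : n ≤ i then (F n i h).compLeftContinuousCompact S (y i) else 0,
      fun n i h => dif_pos h⟩
  have PcComp : ∀ (n m p : ℕ) (h1 : n ≤ m) (h2 : m ≤ p) (h3 : n ≤ p) (x : C(S, V p)),
      (F n m h1).compLeftContinuousCompact S ((F m p h2).compLeftContinuousCompact S x)
        = (F n p h3).compLeftContinuousCompact S x := by
    intro n m p h1 h2 h3 x
    refine ContinuousMap.ext fun s => ?_
    simp only [ContinuousLinearMap.compLeftContinuousCompact_apply]
    exact Fcomp n m p h1 h2 (x s)
  have PcE : ∀ (n m i : ℕ) (h1 : n ≤ m) (h2 : m ≤ i),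
      (F n m h1).compLeftContinuousCompact S (E m i) = E n i := by
    intro n m i h1 h2
    rw [hE m i h2, hE n i (h1.trans h2)]
    exact PcComp n m i h1 h2 (h1.trans h2) (y i)
  have hEdiag : ∀ n, E n n = y n := by
    intro n
    rw [hE n n le_rfl]
    refine ContinuousMap.ext fun s => ?_
    simp only [ContinuousLinearMap.compLeftContinuousCompact_apply]
    rw [hFid n]
    rfl
  obtain ⟨U, hU⟩ : ∃ U : ∀ j m : ℕ, C(S, V (ν m)) →L[K] C(S, V (ν j)),
      ∀ (j m : ℕ) (h : j ≤ m),
        U j m = (F (ν j) (ν m) (hνmono.monotone h)).compLeftContinuousCompact S :=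
    ⟨fun j m => if h : j ≤ m
        then (F (ν j) (ν m) (hνmono.monotone h)).compLeftContinuousCompact S else 0,
      fun j m h => dif_pos h⟩
  have hUid : ∀ j (x : C(S, V (ν j))), U j j x = x := by
    intro j x
    rw [hU j j le_rfl]
    refine ContinuousMap.ext fun s => ?_
    simp only [ContinuousLinearMap.compLeftContinuousCompact_apply]
    rw [hFid (ν j)]
    rfl
  have hUcomp : ∀ (j m p : ℕ), j ≤ m → m ≤ p → ∀ x : C(S, V (ν p)),
      U j m (U m p x) = U j p x := by
    intro j m p h1 h2 x
    rw [hU j m h1, hU m p h2, hU j p (h1.trans h2)]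
    exact PcComp (ν j) (ν m) (ν p) (hνmono.monotone h1) (hνmono.monotone h2)
      (hνmono.monotone (h1.trans h2)) x
  have happrox : ∀ (m p : ℕ), m + 1 ≤ p → ∀ (t : C(S, V (ν (m + 1)))) (ε : ℝ), 0 < ε →
      ∃ zz : C(S, V (ν p)), ‖U m (m + 1) t - U m p zz‖ ≤ ε := by
    intro m p hmp t ε hε
    have hκp : κ (ν m) ≤ ν p := le_trans (hκν m) (hνmono.monotone hmp)
    have hg : ∀ s : S,
        ((F (ν m) (ν (m + 1)) (hνmono.monotone (Nat.le_succ m))).compLeftContinuousCompact S t) s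
          ∈ closure (Set.range (F (ν m) (ν p)
            (hνmono.monotone ((Nat.le_succ m).trans hmp)))) := by
      intro s
      rw [ContinuousLinearMap.compLeftContinuousCompact_apply]
      refine hκ2 (ν m) (ν p) hκp ?_
      exact ⟨F (κ (ν m)) (ν (m + 1)) (hκν m) (t s),
        Fcomp (ν m) (κ (ν m)) (ν (m + 1)) (hκ1 (ν m)) (hκν m) (t s)⟩
    obtain ⟨zz, hzz⟩ := cml_approx
      (F (ν m) (ν p) (hνmono.monotone ((Nat.le_succ m).trans hmp))) _ hg hε
    refine ⟨zz, ?_⟩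
    rw [hU m (m + 1) (Nat.le_succ m), hU m p ((Nat.le_succ m).trans hmp)]
    refine (ContinuousMap.norm_le _ hε.le).mpr fun s => ?_
    rw [ContinuousMap.sub_apply, ContinuousLinearMap.compLeftContinuousCompact_apply,
      ContinuousLinearMap.compLeftContinuousCompact_apply, ← dist_eq_norm]
    exact hzz s
  obtain ⟨a, hTower⟩ := cml_tower (K := K) (fun j => C(S, V (ν j))) U hUid hUcomp happrox
    (fun j => ∑ i ∈ Finset.Ico (ν j) (ν (j + 1)), E (ν j) i)
  -- the index function J
  obtain ⟨J, hJ1, hJ2⟩ : ∃ J : ℕ → ℕ, (∀ n, n < ν (J n)) ∧ (∀ n j, n < ν j → J n ≤ j) := by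
    have hex : ∀ n, ∃ j, n < ν j := fun n => ⟨n + 1, hνgt n⟩
    exact ⟨fun n => Nat.find (hex n), fun n => Nat.find_spec (hex n),
      fun n j h => Nat.find_min' (hex n) h⟩
  have main : ∀ n : ℕ,
      ((F n (ν (J n)) (hJ1 n).le).compLeftContinuousCompact S (a (J n))
          + ∑ i ∈ Finset.Ico n (ν (J n)), E n i)
        - (F n (n + 1) (Nat.le_succ n)).compLeftContinuousCompact S
          ((F (n + 1) (ν (J (n + 1))) (hJ1 (n + 1)).le).compLeftContinuousCompact S (a (J (n + 1)))
            + ∑ i ∈ Finset.Ico (n + 1) (ν (J (n + 1))), E (n + 1) i)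
        = y n := by
    intro n
    have hgen : ∀ (j j' : ℕ) (e : j = j') (h : n ≤ ν j) (h' : n ≤ ν j'),
        (F n (ν j) h).compLeftContinuousCompact S (a j)
          = (F n (ν j') h').compLeftContinuousCompact S (a j') := by
      intro j j' e h h'
      subst e
      rfl
    rw [map_add, PcComp n (n + 1) (ν (J (n + 1))) (Nat.le_succ n) (hJ1 (n + 1)).le
      ((Nat.le_succ n).trans (hJ1 (n + 1)).le) (a (J (n + 1))), map_sum,
      Finset.sum_congr rfl (fun i hi => PcE n (n + 1) i (Nat.le_succ n)
        (Finset.mem_Ico.mp hi).1)]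
    by_cases hc : n + 1 < ν (J n)
    · -- the next index lies in the same block
      have hJeq : J (n + 1) = J n :=
        le_antisymm (hJ2 (n + 1) (J n) hc)
          (hJ2 n (J (n + 1)) (lt_of_le_of_lt (Nat.le_succ n) (hJ1 (n + 1))))
      rw [hgen (J (n + 1)) (J n) hJeq ((Nat.le_succ n).trans (hJ1 (n + 1)).le) (hJ1 n).le]
      rw [show Finset.Ico (n + 1) (ν (J (n + 1))) = Finset.Ico (n + 1) (ν (J n)) from
        by rw [hJeq]]
      rw [Finset.sum_eq_sum_Ico_succ_bot (hJ1 n), hEdiag n]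
      abel
    · -- block boundary: use the tower equation
      have hν1 : ν (J n) = n + 1 := le_antisymm (not_lt.mp hc) (hJ1 n)
      have hJeq : J (n + 1) = J n + 1 := by
        have h1 : n + 1 < ν (J n + 1) := by
          rw [← hν1]; exact hνmono (Nat.lt_succ_self _)
        have h2 := hJ2 (n + 1) (J n + 1) h1
        have h3 : J n < J (n + 1) := by
          by_contra hcon
          push_neg at hcon
          have h4 := hνmono.monotone hcon
          have h5 := hJ1 (n + 1)
          omega
        omega
      have p2' : n ≤ ν (J n + 1) := (hJ1 n).le.trans (hνmono.monotone (Nat.le_succ (J n)))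
      rw [hgen (J (n + 1)) (J n + 1) hJeq ((Nat.le_succ n).trans (hJ1 (n + 1)).le) p2']
      rw [show Finset.Ico (n + 1) (ν (J (n + 1))) = Finset.Ico (n + 1) (ν (J n + 1)) from
        by rw [hJeq]]
      rw [show Finset.Ico n (ν (J n)) = {n} from by rw [hν1]; exact Nat.Ico_succ_singleton n]
      rw [Finset.sum_singleton, hEdiag n]
      have htower := hTower (J n)
      rw [hU (J n) (J n + 1) (Nat.le_succ (J n))] at htower
      have ht2 := sub_eq_iff_eq_add.mp htower
      have hs : (F n (ν (J n)) (hJ1 n).le).compLeftContinuousCompact S (a (J n))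
          = (F n (ν (J n + 1)) p2').compLeftContinuousCompact S (a (J n + 1))
            + ∑ i ∈ Finset.Ico (n + 1) (ν (J n + 1)), E n i := by
        rw [ht2, map_add, map_sum, PcComp n (ν (J n)) (ν (J n + 1)) (hJ1 n).le
          (hνmono.monotone (Nat.le_succ (J n))) p2' (a (J n + 1)),
          Finset.sum_congr rfl (fun i hi => PcE n (ν (J n)) i (hJ1 n).le
            (Finset.mem_Ico.mp hi).1),
          show Finset.Ico (ν (J n)) (ν (J n + 1)) = Finset.Ico (n + 1) (ν (J n + 1)) from
            by rw [hν1]]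
        abel
      rw [hs]
      abel
  refine ⟨fun n => (F n (ν (J n)) (hJ1 n).le).compLeftContinuousCompact S (a (J n))
      + ∑ i ∈ Finset.Ico n (ν (J n)), E n i, fun n s => ?_⟩
  have h2 : (((F n (ν (J n)) (hJ1 n).le).compLeftContinuousCompact S (a (J n))
        + ∑ i ∈ Finset.Ico n (ν (J n)), E n i)
      - (F n (n + 1) (Nat.le_succ n)).compLeftContinuousCompact S
        ((F (n + 1) (ν (J (n + 1))) (hJ1 (n + 1)).le).compLeftContinuousCompact S (a (J (n + 1)))
          + ∑ i ∈ Finset.Ico (n + 1) (ν (J (n + 1))), E (n + 1) i)) s = y n s := by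
    rw [main n]
  rw [ContinuousMap.sub_apply, ContinuousLinearMap.compLeftContinuousCompact_apply,
    Fsingle] at h2
  exact h2



/-- Condensed Mittag-Leffler lemma, tested on an extremally disconnected set: given an inverse
system of Banach spaces over a non-archimedean local field whose transition images satisfy the
Grothendieck density (Mittag-Leffler) condition, for every extremally disconnected compact
Hausdorff space `S` the shift-difference map on `∏ₙ C⁰(S, Vₙ)` is surjective (i.e. the `lim¹`
of the tower `(C⁰(S, Vₙ))ₙ` vanishes). -/
theorem condensed_mittagLeffler
    (K : Type*) [NontriviallyNormedField K] (hK : IsNonarchLocalField K)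
    (V : ℕ → Type*) [∀ n, NormedAddCommGroup (V n)] [∀ n, NormedSpace K (V n)]
    [∀ n, CompleteSpace (V n)]
    (hult : ∀ (n : ℕ) (x y : V n), ‖x + y‖ ≤ max ‖x‖ ‖y‖)
    (f : ∀ n : ℕ, V (n + 1) →L[K] V n)
    -- `F n m h` is the composite transition map `f_{nm} : V m → V n` for `n ≤ m`
    (F : ∀ n m : ℕ, n ≤ m → (V m →L[K] V n))
    (hFid : ∀ n, F n n le_rfl = ContinuousLinearMap.id K (V n))
    (hFsucc : ∀ (n m : ℕ) (h : n ≤ m),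
      F n (m + 1) (h.trans (Nat.le_succ m)) = (F n m h).comp (f m))
    -- Mittag-Leffler density: for each `n` there is `k ≥ n` such that for all `m ≥ k`,
    -- `f_{nm}(V m)` is dense in `f_{nk}(V k)`
    (hML : ∀ n : ℕ, ∃ k : ℕ, ∃ hk : n ≤ k, ∀ (m : ℕ) (hm : k ≤ m),
      Set.range (F n k hk) ⊆ closure (Set.range (F n m (hk.trans hm))))
    (S : Type*) [TopologicalSpace S] [CompactSpace S] [T2Space S]
    [ExtremallyDisconnected S] :
    ∀ y : ∀ n : ℕ, C(S, V n), ∃ g : ∀ n : ℕ, C(S, V n),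
      ∀ (n : ℕ) (s : S), g n s - f n (g (n + 1) s) = y n s := by
  exact condensed_mittagLeffler' K V f F hFid hFsucc hML S
end

section
/- Let K be a non-archimedean local field. Then every K-Banach space V is isomorphic, as a topological K-vector space, to the space C⁰(S, K) of continuous K-valued functions on some profinite set S, equipped with the supremum norm: there exist a compact Hausdorff totally disconnected topological space S and a K-linear homeomorphism V ≅ C⁰(S, K). -/
universe u

set_option linter.unusedSectionVars false
set_option linter.unusedVariables false
set_option linter.unnecessarySimpa false
set_option maxHeartbeats 1000000

open Filter Topology OnePoint
open scoped Classical

section BanachLocalAux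

variable {K : Type*} [NontriviallyNormedField K]

/-- From a `q^ℤ`-valued norm, extract a uniformizer-like element `π` whose norm generates the
value group. -/
lemma IsNonarchLocalField.exists_pi
    (hq : ∃ q : ℝ, 1 < q ∧ ∀ x : K, x ≠ 0 → ∃ n : ℤ, ‖x‖ = q ^ n) :
    ∃ π : K, 1 < ‖π‖ ∧ ∀ x : K, x ≠ 0 → ∃ m : ℤ, ‖x‖ = ‖π‖ ^ m := by
  obtain ⟨q, hq1, hval⟩ := hq
  have hq0 : (0:ℝ) < q := lt_trans one_pos hq1
  -- there is some element of norm q^n with n > 0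
  obtain ⟨x₀, hx₀⟩ := NormedField.exists_one_lt_norm K
  have hx₀0 : x₀ ≠ 0 := by
    rintro rfl; simp at hx₀; linarith
  obtain ⟨n₀, hn₀⟩ := hval x₀ hx₀0
  have hn₀pos : 0 < n₀ := by
    by_contra h
    push_neg at h
    have : ‖x₀‖ ≤ 1 := by
      rw [hn₀]
      calc q ^ n₀ ≤ q ^ (0:ℤ) := zpow_le_zpow_right₀ hq1.le h
      _ = 1 := zpow_zero q
    linarith
  -- the set of k : ℕ such that some element has norm q^(k+1)
  have hA : ∃ k : ℕ, ∃ x : K, x ≠ 0 ∧ ‖x‖ = q ^ ((k : ℤ) + 1) := by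
    refine ⟨n₀.toNat - 1, x₀, hx₀0, ?_⟩
    rw [hn₀]
    congr 1
    omega
  classical
  obtain ⟨π, hπ0, hπ⟩ := Nat.find_spec hA
  set d : ℕ := Nat.find hA with hd
  have hπnorm : ‖π‖ = q ^ ((d:ℤ) + 1) := hπ
  have hπ1 : 1 < ‖π‖ := by
    rw [hπnorm]
    calc (1:ℝ) = q ^ (0:ℤ) := (zpow_zero q).symm
    _ < q ^ ((d:ℤ)+1) := zpow_lt_zpow_right₀ hq1 (by omega)
  refine ⟨π, hπ1, fun x hx => ?_⟩
  obtain ⟨n, hn⟩ := hval x hx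
  set D : ℤ := (d : ℤ) + 1 with hD
  have hDpos : 0 < D := by omega
  refine ⟨n / D, ?_⟩
  -- let r be the remainder
  set r : ℤ := n % D with hr
  have hr0 : 0 ≤ r := Int.emod_nonneg n (by omega)
  have hrD : r < D := Int.emod_lt_of_pos n hDpos
  have hnr : n = D * (n / D) + r := (Int.mul_ediv_add_emod n D).symm
  -- suppose r ≠ 0, derive a contradiction with minimality
  have hrzero : r = 0 := by
    by_contra hrne
    have hrpos : 0 < r := lt_of_le_of_ne hr0 (Ne.symm hrne)
    set y : K := x * π ^ (-(n / D)) with hy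
    have hπne : π ≠ 0 := by
      intro h; rw [h, norm_zero] at hπ1; linarith
    have hyne : y ≠ 0 := mul_ne_zero hx (zpow_ne_zero _ hπne)
    have hynorm : ‖y‖ = q ^ r := by
      rw [hy, norm_mul, norm_zpow, hn, hπnorm, ← zpow_mul,
        ← zpow_add₀ (ne_of_gt hq0)]
      congr 1
      simp only [mul_neg]
      omega
    have : ∃ k : ℕ, k < d ∧ ∃ x : K, x ≠ 0 ∧ ‖x‖ = q ^ ((k:ℤ) + 1) := by
      refine ⟨r.toNat - 1, by omega, y, hyne, ?_⟩
      rw [hynorm]; congr 1; omega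
    obtain ⟨k, hk, hkx⟩ := this
    exact Nat.find_min hA hk hkx
  have : ‖x‖ = (q ^ D) ^ (n / D) := by
    rw [hn, ← zpow_mul]
    congr 1
    rw [hrzero] at hnr
    omega
  rw [this, hπnorm]

end BanachLocalAux

section BanachLocalAux2

variable (K : Type*) [NontriviallyNormedField K]
variable {V : Type u} [NormedAddCommGroup V] [NormedSpace K V]

/-- `ρ⁻¹`-orthogonality property for a family `M` of vectors. -/
def GoodFam (ρ : ℝ) (M : Set V) : Prop :=
  ∀ s : Finset V, ↑s ⊆ M → ∀ c : V → K, ∀ i ∈ s, c i ≠ 0 →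
    ‖c i‖ < ρ * ‖∑ j ∈ s, c j • j‖

variable {K}

/-- discreteness gap for the norm of `K` -/
lemma norm_gap {ρ : ℝ} (hρ : 1 < ρ)
    (hval : ∀ x : K, x ≠ 0 → ∃ n : ℤ, ‖x‖ = ρ ^ n)
    {a b : K} (h : ‖a‖ < ‖b‖) : ρ * ‖a‖ ≤ ‖b‖ := by
  have hb : b ≠ 0 := by rintro rfl; simp at h; exact absurd h (not_lt.mpr (norm_nonneg a))
  rcases eq_or_ne a 0 with rfl | ha
  · simpa using norm_nonneg b
  obtain ⟨i, hi⟩ := hval a ha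
  obtain ⟨j, hj⟩ := hval b hb
  rw [hi, hj] at h ⊢
  have hij : i < j := (zpow_lt_zpow_iff_right₀ hρ).mp h
  calc ρ * ρ ^ i = ρ ^ (i + 1) := by rw [zpow_add₀ (by positivity), zpow_one, mul_comm]
  _ ≤ ρ ^ j := zpow_le_zpow_right₀ hρ.le (by omega)

/-- separation of a good family -/
lemma GoodFam.sep {ρ : ℝ} (hρ : 0 < ρ) {M : Set V} (hg : GoodFam K ρ M)
    {m m' : V} (hm : m ∈ M) (hm' : m' ∈ M) (hne : m ≠ m') : ρ⁻¹ < ‖m - m'‖ := by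
  classical
  have h := hg {m, m'} (by
      intro x hx
      simp only [Finset.coe_insert, Finset.coe_singleton, Set.mem_insert_iff,
        Set.mem_singleton_iff] at hx
      rcases hx with rfl | rfl <;> assumption)
    (fun j => if j = m' then -1 else 1) m (by simp) (by simp [hne])
  have h1 : (if m = m' then (-1:K) else 1) = 1 := if_neg hne
  have h2 : (if m' = m' then (-1:K) else 1) = -1 := if_pos rfl
  rw [Finset.sum_pair hne, h1, h2, one_smul, neg_one_smul, norm_one,
    ← sub_eq_add_neg] at h
  rw [inv_eq_one_div, div_lt_iff₀ hρ]
  have := mul_comm ρ ‖m - m'‖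
  linarith

/-- existence of a maximal good family inside `U` -/
lemma exists_maximal_good (ρ : ℝ) :
    ∃ M : Set V, Maximal (fun N : Set V =>
      (N ⊆ {v : V | ρ⁻¹ < ‖v‖ ∧ ‖v‖ ≤ 1}) ∧ GoodFam K ρ N) M := by
  obtain ⟨M, -, hM⟩ := zorn_subset_nonempty
    {N : Set V | (N ⊆ {v : V | ρ⁻¹ < ‖v‖ ∧ ‖v‖ ≤ 1}) ∧ GoodFam K ρ N}
    (fun c hc hchain hcne => by
      refine ⟨⋃₀ c, ⟨?_, ?_⟩, fun s hs => Set.subset_sUnion_of_mem hs⟩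
      · intro v hv
        obtain ⟨N, hN, hvN⟩ := hv
        exact (hc hN).1 hvN
      · intro s hs c' i hi hci
        have : ∃ N ∈ c, (s : Set V) ⊆ N := by
          apply DirectedOn.exists_mem_subset_of_finset_subset_biUnion hcne
            (hchain.directedOn)
          rwa [← Set.sUnion_eq_biUnion]
        obtain ⟨N, hNc, hsN⟩ := this
        exact (hc hNc).2 s hsN c' i hi hci)
    ∅ ⟨Set.empty_subset _, fun s hs c i hi hci => by
      simp only [Set.subset_empty_iff, Finset.coe_eq_empty] at hs
      subst hs; simp at hi⟩
  exact ⟨M, hM⟩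

end BanachLocalAux2

section BLA3

variable {K : Type*} [NontriviallyNormedField K]
variable {V : Type u} [NormedAddCommGroup V] [NormedSpace K V]

lemma maximal_good_approx {ρ : ℝ} (hρ : 1 < ρ)
    (hval : ∀ x : K, x ≠ 0 → ∃ n : ℤ, ‖x‖ = ρ ^ n)
    [IsUltrametricDist V]
    {M : Set V} (hmax : Maximal (fun N : Set V =>
      (N ⊆ {u : V | ρ⁻¹ < ‖u‖ ∧ ‖u‖ ≤ 1}) ∧ GoodFam K ρ N) M)
    {v : V} (hv1 : ρ⁻¹ < ‖v‖) (hv2 : ‖v‖ ≤ 1) :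
    ∃ w ∈ Submodule.span K (M : Set V), ‖v - w‖ ≤ ρ⁻¹ := by
  classical
  have hρ0 : (0:ℝ) < ρ := lt_trans one_pos hρ
  obtain ⟨⟨hMU, hMg⟩, hmaxx⟩ := hmax
  by_cases hvM : v ∈ M
  · exact ⟨v, Submodule.subset_span hvM, by rw [sub_self, norm_zero]; positivity⟩
  have hnot : ¬ GoodFam K ρ (insert v M) := by
    intro hg
    have hsubU : insert v M ⊆ {u : V | ρ⁻¹ < ‖u‖ ∧ ‖u‖ ≤ 1} :=
      Set.insert_subset ⟨hv1, hv2⟩ hMU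
    exact hvM (hmaxx ⟨hsubU, hg⟩ (Set.subset_insert v M) (Set.mem_insert v M))
  simp only [GoodFam, not_forall, not_lt, exists_prop] at hnot
  obtain ⟨s, hsub, c, i, his, hci, hge⟩ := hnot
  have hvs : v ∈ s := by
    by_contra hvs
    have hsM : (s : Set V) ⊆ M := by
      intro x hx
      rcases Set.mem_insert_iff.mp (hsub hx) with rfl | h
      · exact absurd hx hvs
      · exact h
    exact absurd (hMg s hsM c i his hci) (not_lt.mpr hge)
  have hsubE : ∀ x ∈ s.erase v, x ∈ M := by
    intro x hx
    obtain ⟨hxv, hxs⟩ := Finset.mem_erase.mp hx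
    rcases Set.mem_insert_iff.mp (hsub (Finset.mem_coe.mpr hxs)) with h | h
    · exact absurd h hxv
    · exact h
  have hcv : c v ≠ 0 := by
    intro h0
    have hsum : ∑ j ∈ s.erase v, c j • j = ∑ j ∈ s, c j • j := by
      rw [← Finset.add_sum_erase s _ hvs, h0, zero_smul, zero_add]
    have hiv : i ≠ v := by rintro rfl; exact hci h0
    have hie : i ∈ s.erase v := Finset.mem_erase.mpr ⟨hiv, his⟩
    have := hMg (s.erase v) (fun x hx => hsubE x hx) c i hie hci
    rw [hsum] at this
    exact absurd this (not_lt.mpr hge)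
  have hcv0 : (0:ℝ) < ‖c v‖ := norm_pos_iff.mpr hcv
  have hcvmax : ∀ j ∈ s, ‖c j‖ ≤ ‖c v‖ := by
    by_contra hcon
    push_neg at hcon
    obtain ⟨j₁, hj₁, hlt⟩ := hcon
    obtain ⟨j₀, hj₀s, hj₀max⟩ := Finset.exists_max_image s (fun j => ‖c j‖) ⟨v, hvs⟩
    have hκ : ‖c v‖ < ‖c j₀‖ := lt_of_lt_of_le hlt (hj₀max j₁ hj₁)
    have hj₀v : j₀ ≠ v := by rintro rfl; exact lt_irrefl _ hκ
    have hj₀e : j₀ ∈ s.erase v := Finset.mem_erase.mpr ⟨hj₀v, hj₀s⟩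
    have hj₀ne : c j₀ ≠ 0 := by
      intro h0; rw [h0, norm_zero] at hκ
      exact absurd hκ (not_lt.mpr (norm_nonneg _))
    have hgood := hMg (s.erase v) (fun x hx => hsubE x hx) c j₀ hj₀e hj₀ne
    have hsplit : ∑ j ∈ s.erase v, c j • j = (∑ j ∈ s, c j • j) - c v • v := by
      rw [← Finset.add_sum_erase s _ hvs]; abel
    have h1 : ρ * ‖∑ j ∈ s, c j • j‖ ≤ ‖c j₀‖ := le_trans hge (hj₀max i his)
    have hb1 : ‖∑ j ∈ s, c j • j‖ ≤ ρ⁻¹ * ‖c j₀‖ := by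
      calc ‖∑ j ∈ s, c j • j‖ = ρ⁻¹ * (ρ * ‖∑ j ∈ s, c j • j‖) := by field_simp
      _ ≤ ρ⁻¹ * ‖c j₀‖ := mul_le_mul_of_nonneg_left h1 (by positivity)
    have hgap := norm_gap hρ hval hκ
    have hb2 : ‖c v • v‖ ≤ ρ⁻¹ * ‖c j₀‖ := by
      rw [norm_smul]
      calc ‖c v‖ * ‖v‖ ≤ ‖c v‖ * 1 := mul_le_mul_of_nonneg_left hv2 (norm_nonneg _)
      _ = ρ⁻¹ * (ρ * ‖c v‖) := by field_simp
      _ ≤ ρ⁻¹ * ‖c j₀‖ := mul_le_mul_of_nonneg_left hgap (by positivity)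
    have hsb : ‖∑ j ∈ s.erase v, c j • j‖ ≤ ρ⁻¹ * ‖c j₀‖ := by
      rw [hsplit, sub_eq_add_neg]
      refine le_trans (IsUltrametricDist.norm_add_le_max _ _) ?_
      rw [norm_neg]
      exact max_le hb1 hb2
    have hcontra : ρ * ‖∑ j ∈ s.erase v, c j • j‖ ≤ ‖c j₀‖ := by
      calc ρ * ‖∑ j ∈ s.erase v, c j • j‖ ≤ ρ * (ρ⁻¹ * ‖c j₀‖) :=
        mul_le_mul_of_nonneg_left hsb (by positivity)
      _ = ‖c j₀‖ := by field_simp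
    exact absurd hgood (not_lt.mpr hcontra)
  refine ⟨-∑ j ∈ s.erase v, ((c v)⁻¹ * c j) • j, ?_, ?_⟩
  · apply Submodule.neg_mem
    apply Submodule.sum_mem
    intro j hj
    exact Submodule.smul_mem _ _ (Submodule.subset_span (hsubE j hj))
  · have hkey : v - (-∑ j ∈ s.erase v, ((c v)⁻¹ * c j) • j)
        = (c v)⁻¹ • ∑ j ∈ s, c j • j := by
      rw [sub_neg_eq_add, ← Finset.add_sum_erase s (fun j => c j • j) hvs, smul_add,
        Finset.smul_sum, smul_smul, inv_mul_cancel₀ hcv, one_smul]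
      congr 1
      refine Finset.sum_congr rfl (fun j _ => ?_)
      rw [smul_smul]
    rw [hkey, norm_smul, norm_inv]
    have h1 : ρ * ‖∑ j ∈ s, c j • j‖ ≤ ‖c v‖ := le_trans hge (hcvmax i his)
    have h2 : ‖∑ j ∈ s, c j • j‖ ≤ ρ⁻¹ * ‖c v‖ := by
      calc ‖∑ j ∈ s, c j • j‖ = ρ⁻¹ * (ρ * ‖∑ j ∈ s, c j • j‖) := by field_simp
      _ ≤ ρ⁻¹ * ‖c v‖ := mul_le_mul_of_nonneg_left h1 (by positivity)
    calc ‖c v‖⁻¹ * ‖∑ j ∈ s, c j • j‖ ≤ ‖c v‖⁻¹ * (ρ⁻¹ * ‖c v‖) :=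
      mul_le_mul_of_nonneg_left h2 (by positivity)
    _ = ρ⁻¹ := by field_simp

lemma span_approx_iter {π : K} (hπ : 1 < ‖π‖) {M : Set V}
    (happrox : ∀ u : V, ‖π‖⁻¹ < ‖u‖ → ‖u‖ ≤ 1 →
      ∃ w ∈ Submodule.span K M, ‖u - w‖ ≤ ‖π‖⁻¹) :
    ∀ (k : ℕ) (n : ℤ) (v : V), ‖v‖ ≤ ‖π‖ ^ n →
      ∃ w ∈ Submodule.span K M, ‖v - w‖ ≤ ‖π‖ ^ (n - (k:ℤ)) := by
  have hρ0 : (0:ℝ) < ‖π‖ := lt_trans one_pos hπ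
  have hπ0 : π ≠ 0 := by
    intro h; rw [h, norm_zero] at hπ; linarith
  intro k
  induction k with
  | zero =>
    intro n v hv
    exact ⟨0, Submodule.zero_mem _, by simpa using hv⟩
  | succ k ih =>
    intro n v hv
    by_cases h0 : v = 0
    · refine ⟨0, Submodule.zero_mem _, ?_⟩
      rw [h0, sub_zero, norm_zero]
      positivity
    obtain ⟨m, hm1, hm2⟩ := exists_mem_Ioc_zpow (norm_pos_iff.mpr h0) hπ
    have hnorm : ‖π ^ (-(m+1)) • v‖ = ‖π‖ ^ (-(m+1)) * ‖v‖ := by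
      rw [norm_smul, norm_zpow]
    have hu1 : ‖π‖⁻¹ < ‖π ^ (-(m+1)) • v‖ := by
      rw [hnorm]
      have : ‖π‖ ^ (-(m+1)) * ‖π‖ ^ m < ‖π‖ ^ (-(m+1)) * ‖v‖ :=
        mul_lt_mul_of_pos_left hm1 (zpow_pos hρ0 _)
      calc ‖π‖⁻¹ = ‖π‖ ^ (-(m+1)) * ‖π‖ ^ m := by
            rw [← zpow_add₀ (ne_of_gt hρ0), ← zpow_neg_one]
            congr 1
            ring
      _ < _ := this
    have hu2 : ‖π ^ (-(m+1)) • v‖ ≤ 1 := by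
      rw [hnorm]
      calc ‖π‖ ^ (-(m+1)) * ‖v‖ ≤ ‖π‖ ^ (-(m+1)) * ‖π‖ ^ (m+1) :=
        mul_le_mul_of_nonneg_left hm2 (le_of_lt (zpow_pos hρ0 _))
      _ = ‖π‖ ^ (-(m+1) + (m+1)) := (zpow_add₀ (ne_of_gt hρ0) _ _).symm
      _ = 1 := by
        rw [show -(m+1) + (m+1) = (0:ℤ) by ring, zpow_zero]
    obtain ⟨w, hw, hwb⟩ := happrox _ hu1 hu2
    have hsmul : π ^ (m+1) • (π ^ (-(m+1)) • v - w) = v - π ^ (m+1) • w := by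
      rw [smul_sub, smul_smul, ← zpow_add₀ hπ0,
        show m + 1 + -(m+1) = (0:ℤ) by ring, zpow_zero, one_smul]
    have hstep : ‖v - π ^ (m+1) • w‖ ≤ ‖π‖ ^ (n - 1) := by
      rw [← hsmul, norm_smul, norm_zpow]
      have hb : ‖π‖ ^ (m+1) * ‖π ^ (-(m+1)) • v - w‖ ≤ ‖π‖ ^ (m+1) * ‖π‖⁻¹ :=
        mul_le_mul_of_nonneg_left hwb (le_of_lt (zpow_pos hρ0 _))
      have heq : ‖π‖ ^ (m+1) * ‖π‖⁻¹ = ‖π‖ ^ m := by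
        rw [← zpow_neg_one, ← zpow_add₀ (ne_of_gt hρ0)]
        congr 1
        ring
      have hmn : m ≤ n - 1 := by
        have : ‖π‖ ^ m < ‖π‖ ^ n := lt_of_lt_of_le hm1 hv
        have := (zpow_lt_zpow_iff_right₀ hπ).mp this
        omega
      calc ‖π‖ ^ (m+1) * ‖π ^ (-(m+1)) • v - w‖ ≤ ‖π‖ ^ m := by rw [← heq]; exact hb
      _ ≤ ‖π‖ ^ (n-1) := zpow_le_zpow_right₀ hπ.le hmn
    obtain ⟨w', hw', hwb'⟩ := ih (n-1) (v - π ^ (m+1) • w) hstep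
    refine ⟨π ^ (m+1) • w + w',
      Submodule.add_mem _ (Submodule.smul_mem _ _ hw) hw', ?_⟩
    have hre : v - (π ^ (m+1) • w + w') = (v - π ^ (m+1) • w) - w' := by abel
    rw [hre]
    calc ‖v - π ^ (m+1) • w - w'‖ ≤ ‖π‖ ^ (n - 1 - (k:ℤ)) := hwb'
    _ = ‖π‖ ^ (n - (((k+1):ℕ):ℤ)) := by congr 1; push_cast; ring

lemma span_dense_of_approx {π : K} (hπ : 1 < ‖π‖) {M : Set V}
    (happrox : ∀ u : V, ‖π‖⁻¹ < ‖u‖ → ‖u‖ ≤ 1 →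
      ∃ w ∈ Submodule.span K M, ‖u - w‖ ≤ ‖π‖⁻¹) (v : V) {ε : ℝ} (hε : 0 < ε) :
    ∃ w ∈ Submodule.span K M, ‖v - w‖ < ε := by
  have hρ0 : (0:ℝ) < ‖π‖ := lt_trans one_pos hπ
  obtain ⟨n, hn⟩ : ∃ n : ℤ, ‖v‖ ≤ ‖π‖ ^ n := by
    rcases eq_or_ne v 0 with rfl | h0
    · exact ⟨0, by simp⟩
    · obtain ⟨m, -, hm2⟩ := exists_mem_Ioc_zpow (norm_pos_iff.mpr h0) hπ
      exact ⟨m + 1, hm2⟩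
  obtain ⟨k, hk⟩ := pow_unbounded_of_one_lt (‖π‖ ^ n / ε) hπ
  have hlt : ‖π‖ ^ (n - (k:ℤ)) < ε := by
    rw [zpow_sub₀ (ne_of_gt hρ0), zpow_natCast]
    rw [div_lt_iff₀ hε] at hk
    rw [div_lt_iff₀ (by positivity)]
    calc ‖π‖ ^ n < ‖π‖ ^ k * ε := hk
    _ = ε * ‖π‖ ^ k := mul_comm _ _
  obtain ⟨w, hw, hb⟩ := span_approx_iter hπ happrox k n v hn
  exact ⟨w, hw, lt_of_le_of_lt hb hlt⟩

abbrev Xtype (M : Set V) (m₀ : V) : Type u := {x : V // x ∈ M ∧ x ≠ m₀}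

open Classical in
noncomputable def coefFn (M : Set V) (m₀ : V) (f : C(OnePoint (Xtype M m₀), K))
    (m : ↥M) : K :=
  if h : (m : V) = m₀ then f ∞
  else f ((⟨(m : V), m.2, h⟩ : Xtype M m₀) : OnePoint (Xtype M m₀)) - f ∞

noncomputable def TFun (M : Set V) (m₀ : V) (f : C(OnePoint (Xtype M m₀), K)) : V :=
  ∑' m : ↥M, coefFn M m₀ f m • (m : V)

section TLemmas

variable {M : Set V} {m₀ : V} [DiscreteTopology (Xtype M m₀)]

lemma coefFn_tendsto (f : C(OnePoint (Xtype M m₀), K)) :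
    Tendsto (coefFn M m₀ f) cofinite (𝓝 0) := by
  rw [NormedAddCommGroup.tendsto_nhds_zero]
  intro ε hε
  rw [Filter.eventually_cofinite]
  have htends : Tendsto (fun x : Xtype M m₀ => f x) cofinite (𝓝 (f ∞)) :=
    (OnePoint.continuous_iff_from_discrete _).mp f.continuous
  have hev := Metric.tendsto_nhds.mp htends ε hε
  rw [Filter.eventually_cofinite] at hev
  apply Set.Finite.subset (Set.Finite.union
    (Set.Subsingleton.finite (fun a ha b hb =>
      Subtype.ext ((ha : (a:V) = m₀).trans (hb : (b:V) = m₀).symm)))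
    (Set.Finite.image (fun x : Xtype M m₀ => (⟨x.1, x.2.1⟩ : ↥M)) hev))
  intro m hm
  by_cases h : (m : V) = m₀
  · exact Or.inl h
  · refine Or.inr ⟨⟨(m : V), m.2, h⟩, ?_, rfl⟩
    simp only [Set.mem_setOf_eq, not_lt] at hm ⊢
    simp only [coefFn] at hm
    rw [dif_neg h] at hm
    rw [dist_eq_norm]
    exact hm

lemma summable_coefFn [IsUltrametricDist V] [CompleteSpace V]
    (hM1 : ∀ m ∈ M, ‖m‖ ≤ 1) (f : C(OnePoint (Xtype M m₀), K)) :
    Summable (fun m : ↥M => coefFn M m₀ f m • (m : V)) := by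
  apply NonarchimedeanAddGroup.summable_of_tendsto_cofinite_zero
  rw [NormedAddCommGroup.tendsto_nhds_zero]
  intro ε hε
  filter_upwards [(NormedAddCommGroup.tendsto_nhds_zero.mp (coefFn_tendsto f)) ε hε] with m hm
  rw [norm_smul]
  calc ‖coefFn M m₀ f m‖ * ‖(m:V)‖ ≤ ‖coefFn M m₀ f m‖ * 1 :=
    mul_le_mul_of_nonneg_left (hM1 _ m.2) (norm_nonneg _)
  _ = ‖coefFn M m₀ f m‖ := mul_one _
  _ < ε := hm

lemma coefFn_add (f g : C(OnePoint (Xtype M m₀), K)) (m : ↥M) :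
    coefFn M m₀ (f + g) m = coefFn M m₀ f m + coefFn M m₀ g m := by
  simp only [coefFn]
  by_cases h : (m : V) = m₀
  · rw [dif_pos h, dif_pos h, dif_pos h, ContinuousMap.add_apply]
  · rw [dif_neg h, dif_neg h, dif_neg h, ContinuousMap.add_apply, ContinuousMap.add_apply]
    ring

lemma coefFn_smul (c : K) (f : C(OnePoint (Xtype M m₀), K)) (m : ↥M) :
    coefFn M m₀ (c • f) m = c * coefFn M m₀ f m := by
  simp only [coefFn]
  by_cases h : (m : V) = m₀
  · rw [dif_pos h, dif_pos h, ContinuousMap.smul_apply, smul_eq_mul]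
  · rw [dif_neg h, dif_neg h, ContinuousMap.smul_apply, ContinuousMap.smul_apply,
      smul_eq_mul, smul_eq_mul]
    ring

lemma TFun_add [IsUltrametricDist V] [CompleteSpace V]
    (hM1 : ∀ m ∈ M, ‖m‖ ≤ 1) (f g : C(OnePoint (Xtype M m₀), K)) :
    TFun M m₀ (f + g) = TFun M m₀ f + TFun M m₀ g := by
  rw [TFun, TFun, TFun, ← Summable.tsum_add (summable_coefFn hM1 f) (summable_coefFn hM1 g)]
  congr 1
  funext m
  rw [coefFn_add, add_smul]

lemma TFun_smul [IsUltrametricDist V] [CompleteSpace V]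
    (c : K) (f : C(OnePoint (Xtype M m₀), K)) :
    TFun M m₀ (c • f) = c • TFun M m₀ f := by
  rw [TFun, TFun, ← tsum_const_smul'' c]
  congr 1
  funext m
  rw [coefFn_smul, mul_smul]

lemma coefFn_norm_le [IsUltrametricDist K] (f : C(OnePoint (Xtype M m₀), K)) (m : ↥M) :
    ‖coefFn M m₀ f m‖ ≤ ‖f‖ := by
  simp only [coefFn]
  by_cases h : (m : V) = m₀
  · rw [dif_pos h]
    exact f.norm_coe_le_norm ∞
  · rw [dif_neg h, sub_eq_add_neg]
    refine le_trans (IsUltrametricDist.norm_add_le_max _ _) (max_le ?_ ?_)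
    · exact f.norm_coe_le_norm _
    · rw [norm_neg]; exact f.norm_coe_le_norm ∞

lemma TFun_norm_le [IsUltrametricDist V] [IsUltrametricDist K]
    (hM1 : ∀ m ∈ M, ‖m‖ ≤ 1) (f : C(OnePoint (Xtype M m₀), K)) :
    ‖TFun M m₀ f‖ ≤ ‖f‖ := by
  rw [TFun]
  apply IsUltrametricDist.norm_tsum_le_of_forall_le_of_nonneg (norm_nonneg f)
  intro m
  rw [norm_smul]
  calc ‖coefFn M m₀ f m‖ * ‖(m:V)‖ ≤ ‖coefFn M m₀ f m‖ * 1 :=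
    mul_le_mul_of_nonneg_left (hM1 _ m.2) (norm_nonneg _)
  _ = ‖coefFn M m₀ f m‖ := mul_one _
  _ ≤ ‖f‖ := coefFn_norm_le f m


end TLemmas

/-- discreteness of the index set -/
lemma discrete_of_good {ρ : ℝ} (hρ : 0 < ρ) {M : Set V} (hg : GoodFam K ρ M) (m₀ : V) :
    DiscreteTopology (Xtype M m₀) := by
  rw [discreteTopology_iff_isOpen_singleton]
  intro a
  rw [Metric.isOpen_singleton_iff]
  refine ⟨ρ⁻¹, by positivity, fun b hb => ?_⟩
  by_contra hne
  have hval : (b : V) ≠ (a : V) := fun h => hne (Subtype.ext h)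
  have := hg.sep hρ b.2.1 a.2.1 hval
  rw [Subtype.dist_eq, dist_eq_norm] at hb
  linarith

section TLemmas2

variable {M : Set V} {m₀ : V} [DiscreteTopology (Xtype M m₀)]

/-- each coefficient is controlled by the norm of the sum -/
lemma coefFn_le_TFun [IsUltrametricDist V] [CompleteSpace V]
    {ρ : ℝ} (hρ : 0 < ρ) (hg : GoodFam K ρ M) (hM1 : ∀ m ∈ M, ‖m‖ ≤ 1)
    (f : C(OnePoint (Xtype M m₀), K)) (m : ↥M) :
    ‖coefFn M m₀ f m‖ ≤ ρ * ‖TFun M m₀ f‖ := by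
  classical
  rcases eq_or_ne (coefFn M m₀ f m) 0 with h0 | h0
  · rw [h0, norm_zero]; positivity
  have hs : HasSum (fun m : ↥M => coefFn M m₀ f m • (m : V)) (TFun M m₀ f) :=
    (summable_coefFn hM1 f).hasSum
  have htends : Tendsto (fun t : Finset ↥M => ρ * ‖∑ i ∈ t, coefFn M m₀ f i • (i : V)‖)
      atTop (𝓝 (ρ * ‖TFun M m₀ f‖)) := (hs.norm).const_mul ρ
  apply ge_of_tendsto htends
  rw [Filter.eventually_atTop]
  refine ⟨{m}, fun t ht => ?_⟩
  have hmt : m ∈ t := ht (Finset.mem_singleton_self m)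
  set c : V → K := fun x => if h : x ∈ M then coefFn M m₀ f ⟨x, h⟩ else 0 with hc
  have hcval : ∀ i : ↥M, c (i : V) = coefFn M m₀ f i := by
    intro i
    rw [hc]
    simp only []
    rw [dif_pos i.2]
  have hsum : ∑ j ∈ t.image (Subtype.val), c j • j
      = ∑ i ∈ t, coefFn M m₀ f i • (i : V) := by
    rw [Finset.sum_image (by intro x _ y _ h; exact Subtype.ext h)]
    exact Finset.sum_congr rfl (fun i _ => by rw [hcval])
  have hsub : ↑(t.image (Subtype.val)) ⊆ M := by
    intro x hx
    simp only [Finset.coe_image, Set.mem_image, Finset.mem_coe] at hx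
    obtain ⟨i, -, rfl⟩ := hx
    exact i.2
  have hmem : (m : V) ∈ t.image Subtype.val := Finset.mem_image_of_mem _ hmt
  have hcm : c (m : V) ≠ 0 := by rw [hcval]; exact h0
  have := hg (t.image Subtype.val) hsub c (m : V) hmem hcm
  rw [hsum, hcval] at this
  exact le_of_lt this

/-- norm lower bound: `‖f‖ ≤ ρ * ‖T f‖` given coefficient bounds -/
lemma norm_le_of_coef [IsUltrametricDist K] (hm₀ : m₀ ∈ M)
    (f : C(OnePoint (Xtype M m₀), K)) {C : ℝ} (hC : 0 ≤ C)
    (hcoef : ∀ m : ↥M, ‖coefFn M m₀ f m‖ ≤ C) : ‖f‖ ≤ C := by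
  rw [ContinuousMap.norm_le f hC]
  intro y
  induction y using OnePoint.rec with
  | infty =>
    have : f ∞ = coefFn M m₀ f ⟨m₀, hm₀⟩ := by rw [coefFn, dif_pos rfl]
    rw [this]
    exact hcoef _
  | coe x =>
    have hx : coefFn M m₀ f ⟨(x : V), x.2.1⟩ = f x - f ∞ := by
      rw [coefFn, dif_neg x.2.2]
    have hm : f ∞ = coefFn M m₀ f ⟨m₀, hm₀⟩ := by rw [coefFn, dif_pos rfl]
    have : f x = coefFn M m₀ f ⟨(x : V), x.2.1⟩ + coefFn M m₀ f ⟨m₀, hm₀⟩ := by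
      rw [hx, ← hm]; ring
    rw [this]
    exact le_trans (IsUltrametricDist.norm_add_le_max _ _) (max_le (hcoef _) (hcoef _))

/-- the constant function 1 is mapped to `m₀` -/
lemma TFun_const_one (hm₀ : m₀ ∈ M) :
    TFun M m₀ (ContinuousMap.const _ (1:K)) = m₀ := by
  rw [TFun]
  rw [tsum_eq_single (⟨m₀, hm₀⟩ : ↥M) ?_]
  · rw [coefFn, dif_pos rfl]
    simp
  · intro m' hne
    have h : (m' : V) ≠ m₀ := by
      intro h; exact hne (Subtype.ext h)
    rw [coefFn, dif_neg h]
    simp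

/-- the indicator function of `{x}` is mapped to `x` -/
lemma TFun_indicator (hm₀ : m₀ ∈ M) (x : Xtype M m₀) :
    TFun M m₀ (OnePoint.continuousMapMkDiscrete
      (fun y : Xtype M m₀ => if y = x then (1:K) else 0) 0
      (by
        apply (tendsto_congr' ?_).mpr tendsto_const_nhds
        rw [Filter.eventuallyEq_iff_exists_mem]
        refine ⟨{y | y ≠ x}, ?_, fun y hy => if_neg hy⟩
        rw [Filter.mem_cofinite]
        apply Set.Finite.subset (Set.finite_singleton x)
        intro y hy
        simp only [Set.mem_compl_iff, Set.mem_setOf_eq, not_not] at hy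
        exact hy)) = (x : V) := by
  set f := OnePoint.continuousMapMkDiscrete
      (fun y : Xtype M m₀ => if y = x then (1:K) else 0) 0 _ with hf
  have hfinf : f ∞ = 0 := rfl
  have hfcoe : ∀ y : Xtype M m₀, f y = if y = x then (1:K) else 0 := fun y => rfl
  rw [TFun]
  rw [tsum_eq_single (⟨(x : V), x.2.1⟩ : ↥M) ?_]
  · have h : ((⟨(x : V), x.2.1⟩ : ↥M) : V) ≠ m₀ := x.2.2
    rw [coefFn, dif_neg h]
    have : (⟨((⟨(x : V), x.2.1⟩ : ↥M) : V), (⟨(x : V), x.2.1⟩ : ↥M).2, h⟩ : Xtype M m₀) = x := by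
      apply Subtype.ext; rfl
    rw [this, hfcoe, if_pos rfl, hfinf, sub_zero, one_smul]
  · intro m' hne
    by_cases h : (m' : V) = m₀
    · rw [coefFn, dif_pos h, hfinf, zero_smul]
    · rw [coefFn, dif_neg h]
      have hxne : (⟨(m' : V), m'.2, h⟩ : Xtype M m₀) ≠ x := by
        intro heq
        apply hne
        apply Subtype.ext
        have : ((⟨(m' : V), m'.2, h⟩ : Xtype M m₀) : V) = (x : V) := by rw [heq]
        exact this
      rw [hfcoe, if_neg hxne, hfinf, sub_zero, zero_smul]

end TLemmas2

end BLA3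

/-- Every Banach space over a non-archimedean local field `K` is isomorphic, as a topological
`K`-vector space, to the space `C⁰(S, K)` of continuous `K`-valued functions on some profinite
set `S` (with the topology of uniform convergence, i.e. of the supremum norm). -/
theorem banach_iso_continuousFunctions_profinite
    (K : Type*) [NontriviallyNormedField K] (hK : IsNonarchLocalField K)
    (V : Type u) [NormedAddCommGroup V] [NormedSpace K V] [CompleteSpace V]
    (hult : ∀ x y : V, ‖x + y‖ ≤ max ‖x‖ ‖y‖) :
    ∃ S : Profinite.{u}, Nonempty (V ≃L[K] C(S, K)) := by
  classical
  obtain ⟨hult', hcomp, hq, -⟩ := hK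
  haveI : CompleteSpace K := hcomp
  haveI : IsUltrametricDist K :=
    IsUltrametricDist.isUltrametricDist_of_forall_norm_add_le_max_norm hult'
  haveI : IsUltrametricDist V :=
    IsUltrametricDist.isUltrametricDist_of_forall_norm_add_le_max_norm hult
  obtain ⟨π, hπ, hval⟩ := IsNonarchLocalField.exists_pi hq
  have hρ0 : (0:ℝ) < ‖π‖ := lt_trans one_pos hπ
  obtain ⟨M, hmax⟩ := exists_maximal_good (K := K) (V := V) ‖π‖
  obtain ⟨hMU, hMg⟩ := hmax.1
  have hM1 : ∀ m ∈ M, ‖m‖ ≤ 1 := fun m hm => (hMU hm).2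
  have happrox : ∀ u : V, ‖π‖⁻¹ < ‖u‖ → ‖u‖ ≤ 1 →
      ∃ w ∈ Submodule.span K M, ‖u - w‖ ≤ ‖π‖⁻¹ :=
    fun u h1 h2 => maximal_good_approx hπ hval hmax h1 h2
  by_cases htriv : ∀ v : V, v = 0
  · refine ⟨Profinite.of (ULift.{u} Empty), ⟨?_⟩⟩
    haveI : IsEmpty ↥(Profinite.of (ULift.{u} Empty)) := by
      show IsEmpty (ULift.{u} Empty)
      infer_instance
    haveI hVs : Subsingleton V := ⟨fun a b => (htriv a).trans (htriv b).symm⟩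
    haveI hCs : Subsingleton C(↥(Profinite.of (ULift.{u} Empty)), K) :=
      ⟨fun f g => ContinuousMap.ext (fun x => isEmptyElim x)⟩
    exact
    { toFun := fun _ => 0
      map_add' := fun _ _ => Subsingleton.elim _ _
      map_smul' := fun _ _ => Subsingleton.elim _ _
      invFun := fun _ => 0
      left_inv := fun v => Subsingleton.elim _ _
      right_inv := fun f => Subsingleton.elim _ _
      continuous_toFun := continuous_const
      continuous_invFun := continuous_const }
  · push_neg at htriv
    obtain ⟨v₀, hv₀⟩ := htriv
    have hMne : M.Nonempty := by
      rw [Set.nonempty_iff_ne_empty]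
      rintro rfl
      obtain ⟨w, hw, hb⟩ := span_dense_of_approx hπ happrox v₀ (norm_pos_iff.mpr hv₀)
      rw [Submodule.span_empty, Submodule.mem_bot] at hw
      rw [hw, sub_zero] at hb
      exact lt_irrefl _ hb
    obtain ⟨m₀, hm₀⟩ := hMne
    haveI := discrete_of_good hρ0 hMg m₀
    let Tlin : C(OnePoint (Xtype M m₀), K) →ₗ[K] V :=
      { toFun := TFun M m₀
        map_add' := TFun_add hM1
        map_smul' := TFun_smul }
    let T : C(OnePoint (Xtype M m₀), K) →L[K] V :=
      LinearMap.mkContinuous Tlin 1 (fun f => by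
        rw [one_mul]
        exact TFun_norm_le hM1 f)
    have hlow : ∀ f : C(OnePoint (Xtype M m₀), K), ‖f‖ ≤ ‖π‖ * ‖T f‖ := fun f =>
      norm_le_of_coef hm₀ f (by positivity) (fun m => coefFn_le_TFun hρ0 hMg hM1 f m)
    have hanti : AntilipschitzWith (‖π‖.toNNReal) ⇑T := by
      apply AntilipschitzWith.of_le_mul_dist
      intro f g
      rw [dist_eq_norm, dist_eq_norm, ← map_sub]
      calc ‖f - g‖ ≤ ‖π‖ * ‖T (f - g)‖ := hlow (f - g)
      _ = ↑‖π‖.toNNReal * ‖T (f - g)‖ := by rw [Real.coe_toNNReal _ hρ0.le]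
    have hinj : Function.Injective ⇑T := by
      intro f g hfg
      have h1 : ‖f - g‖ ≤ 0 := by
        have h2 := hlow (f - g)
        rw [map_sub, hfg, sub_self, norm_zero, mul_zero] at h2
        exact h2
      rwa [norm_le_zero_iff, sub_eq_zero] at h1
    have hclosed : IsClosed (Set.range ⇑T) :=
      hanti.isClosed_range T.uniformContinuous
    have hMrange : M ⊆ Set.range ⇑T := by
      intro m hm
      by_cases h : m = m₀
      · subst h
        exact ⟨ContinuousMap.const _ 1, TFun_const_one hm₀⟩
      · exact ⟨_, TFun_indicator hm₀ ⟨m, hm, h⟩⟩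
    have hspan : Submodule.span K M ≤ LinearMap.range (T : C(OnePoint (Xtype M m₀), K) →ₗ[K] V) := by
      rw [Submodule.span_le]
      intro m hm
      obtain ⟨f, hf⟩ := hMrange hm
      exact ⟨f, hf⟩
    have hsurj : Function.Surjective ⇑T := by
      intro v
      have hv : v ∈ closure (Set.range ⇑T) := by
        rw [Metric.mem_closure_iff]
        intro ε hε
        obtain ⟨w, hw, hb⟩ := span_dense_of_approx hπ happrox v hε
        obtain ⟨f, hf⟩ := hspan hw
        exact ⟨w, ⟨f, hf⟩, by rwa [dist_eq_norm]⟩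
      rw [hclosed.closure_eq] at hv
      exact hv
    let e : C(OnePoint (Xtype M m₀), K) ≃ₗ[K] V :=
      LinearEquiv.ofBijective Tlin ⟨hinj, hsurj⟩
    refine ⟨Profinite.of (OnePoint (Xtype M m₀)), ⟨ContinuousLinearEquiv.symm
      { toLinearEquiv := e
        continuous_toFun := T.continuous
        continuous_invFun := (hanti.to_rightInverse e.right_inv).continuous }⟩⟩
end

section
/- Let K be a non-archimedean local field, let V be a Hausdorff topological K-vector space, and let W ⊆ V be a K-linear subspace that is not closed in V. Let S₀ denote the set underlying V equipped with the discrete topology, and let S = βS₀ be its Stone–Čech compactification. Equip the quotient V/W with the quotient topology. Then the map C⁰(S, V) → C⁰(S, V/W), given by post-composition with the quotient map V → V/W, is not surjective: there exists a continuous function S → V/W that does not lift to a continuous function S → V. -/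
/-- A type synonym equipping a type with the discrete topology. -/
def DiscreteOf (X : Type*) : Type _ := X

instance (X : Type*) : TopologicalSpace (DiscreteOf X) := ⊥

instance (X : Type*) : DiscreteTopology (DiscreteOf X) := ⟨rfl⟩

open Filter Set

namespace StoneCechCardAux

variable {X : Type*}

open Classical in
/-- A member of an independent family of subsets of `Finset X × Finset (Finset X)`. -/
noncomputable def dset (A : Set X) : Set (Finset X × Finset (Finset X)) :=
  {p | p.1.filter (fun x => x ∈ A) ∈ p.2}

lemma indep [Nonempty X] (A : Set X) (T : Finset (Set X)) (hA : A ∉ T) :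
    (dset A ∩ ⋂ B ∈ T, (dset B)ᶜ).Nonempty := by
  classical
  have hne : ∀ B ∈ T, (symmDiff A B).Nonempty := fun B hB =>
    Set.symmDiff_nonempty.2 (by rintro rfl; exact hA hB)
  choose! g hg using hne
  set s : Finset X := T.image g with hs
  refine ⟨(s, {s.filter (fun x => x ∈ A)}), ?_, ?_⟩
  · show s.filter (fun x => x ∈ A) ∈ ({s.filter (fun x => x ∈ A)} : Finset (Finset X))
    exact Finset.mem_singleton_self _
  · rw [Set.mem_iInter₂]
    intro B hB hmem
    have heq : s.filter (fun x => x ∈ B) = s.filter (fun x => x ∈ A) :=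
      Finset.mem_singleton.1 hmem
    have hgs : g B ∈ s := Finset.mem_image_of_mem g hB
    have hiff : g B ∈ B ↔ g B ∈ A := by
      constructor
      · intro h
        have h1 : g B ∈ s.filter (fun x => x ∈ B) := Finset.mem_filter.2 ⟨hgs, h⟩
        rw [heq] at h1
        exact (Finset.mem_filter.1 h1).2
      · intro h
        have h1 : g B ∈ s.filter (fun x => x ∈ A) := Finset.mem_filter.2 ⟨hgs, h⟩
        rw [← heq] at h1
        exact (Finset.mem_filter.1 h1).2
    rcases Set.mem_symmDiff.1 (hg B hB) with ⟨h1, h2⟩ | ⟨h1, h2⟩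
    · exact h2 (hiff.2 h1)
    · exact h2 (hiff.1 h1)

end StoneCechCardAux

namespace StoneCechCardAux

lemma exists_inj_ultrafilter (X : Type u) [Infinite X] :
    ∃ F : Set X → Ultrafilter X, Function.Injective F := by
  classical
  -- an injection of the index type into `X`
  obtain ⟨ι⟩ : Nonempty ((Finset X × Finset (Finset X)) ↪ X) := by
    rw [← Cardinal.le_def, ← Cardinal.mul_def, Cardinal.mk_finset_of_infinite,
      Cardinal.mk_finset_of_infinite, Cardinal.mk_finset_of_infinite,
      Cardinal.mul_eq_self (Cardinal.aleph0_le_mk X)]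
  set D : Set X → Set X := fun A => ι '' dset A with hD
  have hindep : ∀ (A : Set X) (T : Finset (Set X)), A ∉ T →
      (D A ∩ ⋂ B ∈ T, (D B)ᶜ).Nonempty := by
    intro A T hA
    obtain ⟨p, hp1, hp2⟩ := indep A T hA
    refine ⟨ι p, Set.mem_image_of_mem ι hp1, ?_⟩
    rw [Set.mem_iInter₂]
    intro B hB hmem
    obtain ⟨q, hq, hqp⟩ := hmem
    rw [ι.injective hqp] at hq
    exact (Set.mem_iInter₂.1 hp2 B hB) hq
  set gens : Set X → Set (Set X) :=
    fun A => insert (D A) ((fun B => (D B)ᶜ) '' {B | B ≠ A}) with hgens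
  have hbot : ∀ A, (Filter.generate (gens A)).NeBot := by
    intro A
    rw [Filter.generate_neBot_iff]
    intro t hts htf
    have hch : ∀ w ∈ t \ {D A}, ∃ B, B ≠ A ∧ w = (D B)ᶜ := by
      intro w hw
      rcases hts hw.1 with h | ⟨B, hB, rfl⟩
      · exact absurd h hw.2
      · exact ⟨B, hB, rfl⟩
    choose! c hc1 hc2 using hch
    set T : Finset (Set X) := (htf.diff (t := {D A})).toFinset.image c with hT
    have hAT : A ∉ T := by
      intro hmem
      obtain ⟨w, hw, hcw⟩ := Finset.mem_image.1 hmem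
      exact hc1 w ((htf.diff (t := {D A})).mem_toFinset.1 hw) hcw
    obtain ⟨x, hx1, hx2⟩ := hindep A T hAT
    refine ⟨x, ?_⟩
    rw [Set.mem_sInter]
    intro w hw
    by_cases hwA : w = D A
    · exact hwA ▸ hx1
    · have hw' : w ∈ t \ {D A} := ⟨hw, hwA⟩
      have hw'' : w ∈ (htf.diff (t := {D A})).toFinset := (htf.diff (t := {D A})).mem_toFinset.2 hw'
      have hcT : c w ∈ T := Finset.mem_image_of_mem c hw''
      have := Set.mem_iInter₂.1 hx2 (c w) hcT
      rw [hc2 w hw']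
      exact this
  have hsel : ∀ A, ∃ u : Ultrafilter X, ↑u ≤ Filter.generate (gens A) := by
    intro A
    haveI := hbot A
    exact Ultrafilter.exists_le _
  choose F hF using hsel
  refine ⟨F, ?_⟩
  intro A A' hAA'
  by_contra hne
  have h1 : D A ∈ F A := hF A (Filter.mem_generate_of_mem (Set.mem_insert _ _))
  have h2 : (D A)ᶜ ∈ F A' := hF A' (Filter.mem_generate_of_mem
    (Set.mem_insert_of_mem _ ⟨A, hne, rfl⟩))
  rw [← hAA'] at h2
  exact (Ultrafilter.compl_mem_iff_notMem.1 h2) h1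

lemma exists_surj_stoneCech (X : Type u) [TopologicalSpace X] [DiscreteTopology X] :
    ∃ q : StoneCech X → Ultrafilter X, Function.Surjective q := by
  have hc : Continuous (pure : X → Ultrafilter X) := continuous_of_discreteTopology
  refine ⟨stoneCechExtend hc, ?_⟩
  have hcl : IsClosed (Set.range (stoneCechExtend hc)) :=
    (isCompact_range (continuous_stoneCechExtend hc)).isClosed
  have hsub : Set.range (pure : X → Ultrafilter X) ⊆ Set.range (stoneCechExtend hc) := by
    rintro _ ⟨x, rfl⟩
    exact ⟨stoneCechUnit x, congrFun (stoneCechExtend_extends hc) x⟩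
  have huniv : (Set.univ : Set (Ultrafilter X)) ⊆ Set.range (stoneCechExtend hc) := by
    rw [← denseRange_pure.closure_eq, ← hcl.closure_eq]
    exact closure_mono hsub
  intro u
  exact huniv (Set.mem_univ u)

end StoneCechCardAux


/-- Let `V` be a Hausdorff topological vector space over a non-archimedean local field `K`
and let `W ⊆ V` be a non-closed subspace. Let `S = β(V_disc)` be the Stone–Čech
compactification of the underlying set of `V` with the discrete topology. Then post-composition
with the quotient map `V → V/W` does not map `C⁰(S, V)` onto `C⁰(S, V/W)`: some continuous
map `S → V/W` admits no continuous lift `S → V`. -/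
theorem quotient_continuousMap_not_surjective
    (K : Type*) [NontriviallyNormedField K] (hK : IsNonarchLocalField K)
    (V : Type*) [AddCommGroup V] [Module K V] [TopologicalSpace V]
    [IsTopologicalAddGroup V] [ContinuousSMul K V] [T2Space V]
    (W : Submodule K V) (hW : ¬ IsClosed (W : Set V)) :
    ∃ ψ : C(StoneCech (DiscreteOf V), V ⧸ W),
      ∀ φ : C(StoneCech (DiscreteOf V), V), ⇑W.mkQ ∘ ⇑φ ≠ ⇑ψ := by
  classical
  by_contra hsur
  push_neg at hsur
  -- `V` is infinite
  have hVinf : Infinite V := by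
    by_contra h
    rw [not_infinite_iff_finite] at h
    exact hW (isClosed_discrete _)
  haveI : Infinite (DiscreteOf V) := hVinf
  -- a point in the closure of `W` not in `W`
  obtain ⟨v, hvclo, hvW⟩ : ∃ v, v ∈ closure (W : Set V) ∧ v ∉ W := by
    by_contra h
    push_neg at h
    exact hW (closure_subset_iff_isClosed.1 h)
  have hmkv : (Submodule.Quotient.mk v : V ⧸ W) ≠ 0 :=
    fun h => hvW ((Submodule.Quotient.mk_eq_zero _).1 h)
  have hmkQcont : Continuous ⇑W.mkQ := W.isOpenQuotientMap_mkQ.continuous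
  -- key: open sets of `V ⧸ W` contain `0` iff they contain `mk v`
  have key1 : ∀ U : Set (V ⧸ W), IsOpen U → (Submodule.Quotient.mk v : V ⧸ W) ∈ U →
      (0 : V ⧸ W) ∈ U := by
    intro U hU hvU
    have hpre : IsOpen (⇑W.mkQ ⁻¹' U) := hU.preimage hmkQcont
    have hv' : v ∈ ⇑W.mkQ ⁻¹' U := hvU
    obtain ⟨w, hwU, hwW⟩ := mem_closure_iff.1 hvclo _ hpre hv'
    have : W.mkQ w = 0 := (Submodule.Quotient.mk_eq_zero _).2 hwW
    exact this ▸ hwU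
  have keyIff : ∀ U : Set (V ⧸ W), IsOpen U →
      ((0 : V ⧸ W) ∈ U ↔ (Submodule.Quotient.mk v : V ⧸ W) ∈ U) := by
    intro U hU
    refine ⟨fun h0 => ?_, key1 U hU⟩
    set U' : Set (V ⧸ W) := (fun x => (Submodule.Quotient.mk v : V ⧸ W) - x) ⁻¹' U with hU'def
    have hU' : IsOpen U' := hU.preimage (continuous_const.sub continuous_id)
    have hvU' : (Submodule.Quotient.mk v : V ⧸ W) ∈ U' := by
      show (Submodule.Quotient.mk v : V ⧸ W) - Submodule.Quotient.mk v ∈ U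
      rw [sub_self]; exact h0
    have h0' := key1 U' hU' hvU'
    have : (Submodule.Quotient.mk v : V ⧸ W) - 0 ∈ U := h0'
    rwa [sub_zero] at this
  -- the family of continuous maps into the quotient
  set S := StoneCech (DiscreteOf V) with hS
  have hψcont : ∀ f : Set S,
      Continuous (fun s => if s ∈ f then (Submodule.Quotient.mk v : V ⧸ W) else 0) := by
    intro f
    rw [continuous_def]
    intro U hU
    by_cases h0 : (0 : V ⧸ W) ∈ U
    · have hv0 := (keyIff U hU).1 h0
      convert isOpen_univ
      ext s
      simp only [Set.mem_preimage, Set.mem_univ, iff_true]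
      split_ifs <;> assumption
    · have hv0 : (Submodule.Quotient.mk v : V ⧸ W) ∉ U := fun h => h0 ((keyIff U hU).2 h)
      convert isOpen_empty
      ext s
      simp only [Set.mem_preimage, Set.mem_empty_iff_false, iff_false]
      intro hmem
      split_ifs at hmem
      exacts [hv0 hmem, h0 hmem]
  set Ψual : Set S → C(S, V ⧸ W) := fun f => ⟨_, hψcont f⟩ with hΨual
  -- lift each of them
  have hlift : ∀ f : Set S, ∃ φ : C(S, V), ⇑W.mkQ ∘ ⇑φ = ⇑(Ψual f) := fun f => hsur (Ψual f)
  choose Φ hΦ using hlift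
  -- the restriction map is injective
  have hΨinj : Function.Injective (fun f : Set S => (⇑(Φ f) ∘ stoneCechUnit : DiscreteOf V → V)) := by
    intro f g h
    have hface : ⇑(Φ f) = ⇑(Φ g) :=
      DenseRange.equalizer denseRange_stoneCechUnit (Φ f).continuous (Φ g).continuous h
    have hψeq : ⇑(Ψual f) = ⇑(Ψual g) := by rw [← hΦ f, ← hΦ g, hface]
    ext s
    have := congrFun hψeq s
    simp only [hΨual, ContinuousMap.coe_mk] at this
    by_cases hf : s ∈ f <;> by_cases hg : s ∈ g <;>
      simp only [hf, hg, if_true, if_false, if_pos, if_neg] at this ⊢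
    all_goals first
      | tauto
      | exact absurd this hmkv
      | exact absurd this.symm hmkv
  -- cardinality bounds
  obtain ⟨F, hF⟩ := StoneCechCardAux.exists_inj_ultrafilter (DiscreteOf V)
  obtain ⟨q, hq⟩ := StoneCechCardAux.exists_surj_stoneCech (DiscreteOf V)
  have hG : Function.Injective (Function.surjInv hq ∘ F) :=
    (Function.injective_surjInv hq).comp hF
  have hVeq : (Cardinal.mk V) = Cardinal.mk (DiscreteOf V) := rfl
  have h1 : (2 : Cardinal) ^ Cardinal.mk S ≤
      Cardinal.mk (DiscreteOf V) ^ Cardinal.mk (DiscreteOf V) := by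
    calc (2 : Cardinal) ^ Cardinal.mk S = Cardinal.mk (Set S) := Cardinal.mk_set.symm
      _ ≤ Cardinal.mk (DiscreteOf V → V) := Cardinal.mk_le_of_injective hΨinj
      _ = Cardinal.mk V ^ Cardinal.mk (DiscreteOf V) := (Cardinal.power_def _ _).symm
      _ = _ := by rw [hVeq]
  have h2 : Cardinal.mk (DiscreteOf V) ^ Cardinal.mk (DiscreteOf V) =
      2 ^ Cardinal.mk (DiscreteOf V) :=
    Cardinal.power_self_eq (Cardinal.aleph0_le_mk _)
  have h3 : (2 : Cardinal) ^ Cardinal.mk (DiscreteOf V) ≤ Cardinal.mk S := by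
    calc (2 : Cardinal) ^ Cardinal.mk (DiscreteOf V)
        = Cardinal.mk (Set (DiscreteOf V)) := Cardinal.mk_set.symm
      _ ≤ Cardinal.mk S := Cardinal.mk_le_of_injective hG
  have h4 : (2 : Cardinal) ^ ((2 : Cardinal) ^ Cardinal.mk (DiscreteOf V)) ≤
      2 ^ Cardinal.mk S := Cardinal.power_le_power_left two_ne_zero h3
  have h5 := Cardinal.cantor ((2 : Cardinal) ^ Cardinal.mk (DiscreteOf V))
  rw [h2] at h1
  exact absurd ((h5.trans_le h4).trans_le h1) (lt_irrefl _)
end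

section
/- Let A be a commutative ring, let f ∈ A be a non-zero-divisor, and let M• be a cochain complex of A-modules, indexed by ℤ, such that multiplication by f is injective on each Mⁱ. Then for every i ∈ ℤ, the assignment sending an i-cocycle z of M• to the class of fⁱ·z in H^i(η_f(M•)) is a surjective A-linear map from the module of i-cocycles Zⁱ(M•) onto H^i(η_f(M•)) whose kernel is { z ∈ Zⁱ(M•) : f·z is an i-coboundary of M• }; consequently it induces a canonical isomorphism of A-modules H^i(M•)/H^i(M•)[f] ≅ H^i(η_f(M•)), where H^i(M•)[f] denotes the submodule of f-torsion elements of H^i(M•). -/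
/-!
We formalize the décalage functor `η_f` of Berthelot–Ogus and Bhatt–Morrow–Scholze for an
`f`-torsion-free cochain complex of `A`-modules. A cochain complex of `A`-modules is presented
as an `A`-module `M` together with a differential `d : M →ₗ[A] M` with `d ∘ d = 0` and an
internal grading `G : ℤ → Submodule A M` (so `Mⁱ = G i`) with `d (G i) ⊆ G (i+1)`.
The localization `M[1/f]` is `LocalizedModule (Submonoid.powers f) M`, and
`η_f(M)ⁱ = { α ∈ fⁱ·Mⁱ : dα ∈ f^{i+1}·M^{i+1} } ⊆ M[1/f]`.
-/

universe u

open LocalizedModule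

section Decalage

variable {A : Type u} [CommRing A]

/-- The image of `f` in the localization `A[1/f]`, as a unit. -/
noncomputable def fUnit (f : A) : (Localization (Submonoid.powers f))ˣ :=
  (IsLocalization.map_units (Localization (Submonoid.powers f))
    (⟨f, Submonoid.mem_powers f⟩ : Submonoid.powers f)).unit

variable (f : A) {M : Type u} [AddCommGroup M] [Module A M]

/-- Multiplication by `f ^ j` (for `j : ℤ`) on `M[1/f]`, as an `A`-linear map. -/
noncomputable def fzpow (j : ℤ) :
    LocalizedModule (Submonoid.powers f) M →ₗ[A] LocalizedModule (Submonoid.powers f) M where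
  toFun α := ((fUnit f ^ j : (Localization (Submonoid.powers f))ˣ) :
      Localization (Submonoid.powers f)) • α
  map_add' a b := smul_add _ a b
  map_smul' a α := by
    simp only [RingHom.id_apply]
    rw [← algebraMap_smul (Localization (Submonoid.powers f)) a α,
      ← algebraMap_smul (Localization (Submonoid.powers f)) a
        (((fUnit f ^ j : (Localization (Submonoid.powers f))ˣ) :
          Localization (Submonoid.powers f)) • α),
      smul_smul, smul_smul, mul_comm]

/-- The localization `d[1/f] : M[1/f] → M[1/f]` of the differential `d`. -/
noncomputable def locDiff (d : M →ₗ[A] M) :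
    LocalizedModule (Submonoid.powers f) M →ₗ[A] LocalizedModule (Submonoid.powers f) M :=
  IsLocalizedModule.map (Submonoid.powers f)
    (mkLinearMap (Submonoid.powers f) M) (mkLinearMap (Submonoid.powers f) M) d

variable (d : M →ₗ[A] M) (G : ℤ → Submodule A M)

/-- The degree-`n` term `η_f(M)ⁿ = { α ∈ fⁿ·Mⁿ : dα ∈ f^{n+1}·M^{n+1} }` of the décalage
complex, as a submodule of `M[1/f]`; here `Mⁿ = G n` is the degree-`n` graded piece. -/
noncomputable def etaDeg (n : ℤ) :
    Submodule A (LocalizedModule (Submonoid.powers f) M) :=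
  (G n).map ((fzpow f n).comp (mkLinearMap (Submonoid.powers f) M)) ⊓
    ((G (n + 1)).map ((fzpow f (n + 1)).comp (mkLinearMap (Submonoid.powers f) M))).comap
      (locDiff f d)

/-- Cocycles of `η_f(M)` in degree `n`. -/
noncomputable def etaCocycles (n : ℤ) :
    Submodule A (LocalizedModule (Submonoid.powers f) M) :=
  etaDeg f d G n ⊓ LinearMap.ker (locDiff f d)

/-- Coboundaries of `η_f(M)` in degree `n`. -/
noncomputable def etaBoundaries (n : ℤ) :
    Submodule A (LocalizedModule (Submonoid.powers f) M) :=
  (etaDeg f d G (n - 1)).map (locDiff f d)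

/-- The cohomology `H^n(η_f(M))` of the décalage complex. -/
noncomputable def etaCohomology (n : ℤ) : Type u :=
  ↥(etaCocycles f d G n) ⧸ (etaBoundaries f d G n).comap (etaCocycles f d G n).subtype

noncomputable instance (n : ℤ) : AddCommGroup (etaCohomology f d G n) :=
  inferInstanceAs (AddCommGroup
    (↥(etaCocycles f d G n) ⧸ (etaBoundaries f d G n).comap (etaCocycles f d G n).subtype))

noncomputable instance (n : ℤ) : Module A (etaCohomology f d G n) :=
  inferInstanceAs (Module A
    (↥(etaCocycles f d G n) ⧸ (etaBoundaries f d G n).comap (etaCocycles f d G n).subtype))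

/-- The class in `H^n(η_f(M))` of an `η`-cocycle. -/
noncomputable def etaClass (n : ℤ) (α : ↥(etaCocycles f d G n)) : etaCohomology f d G n :=
  Submodule.Quotient.mk α

/-- Cocycles `Zⁿ(M)` of the original complex. -/
noncomputable def cocycles (n : ℤ) : Submodule A M := G n ⊓ LinearMap.ker d

/-- Coboundaries `Bⁿ(M)` of the original complex. -/
noncomputable def boundaries (n : ℤ) : Submodule A M := (G (n - 1)).map d

/-- Cohomology `Hⁿ(M)` of the original complex. -/
noncomputable def cohomology (n : ℤ) : Type u :=
  ↥(cocycles d G n) ⧸ (boundaries d G n).comap (cocycles d G n).subtype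

noncomputable instance (n : ℤ) : AddCommGroup (cohomology d G n) :=
  inferInstanceAs (AddCommGroup
    (↥(cocycles d G n) ⧸ (boundaries d G n).comap (cocycles d G n).subtype))

noncomputable instance (n : ℤ) : Module A (cohomology d G n) :=
  inferInstanceAs (Module A
    (↥(cocycles d G n) ⧸ (boundaries d G n).comap (cocycles d G n).subtype))

/-- The class in `Hⁿ(M)` of a cocycle. -/
noncomputable def cls (n : ℤ) (z : ↥(cocycles d G n)) : cohomology d G n :=
  Submodule.Quotient.mk z

/-- The `f`-torsion submodule `Hⁿ(M)[f]` of the cohomology. -/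
noncomputable def fTorsion (n : ℤ) : Submodule A (cohomology d G n) :=
  LinearMap.ker (LinearMap.lsmul A (cohomology d G n) f)

end Decalage


section AuxLemmas
variable {A : Type u} [CommRing A] (f : A) {M : Type u} [AddCommGroup M] [Module A M]

-- AUX

lemma fpow_torsion_free (htf : ∀ x : M, f • x = 0 → x = 0) (k : ℕ) :
    ∀ x : M, f ^ k • x = 0 → x = 0 := by
  induction k with
  | zero => intro x h; simpa using h
  | succ n ih =>
    intro x h
    exact ih x (htf _ (by rw [smul_smul, ← pow_succ']; exact h))

lemma mk_inj (htf : ∀ x : M, f • x = 0 → x = 0) :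
    Function.Injective (mkLinearMap (Submonoid.powers f) M) := by
  intro x y h
  simp only [mkLinearMap_apply] at h
  rw [LocalizedModule.mk_eq] at h
  obtain ⟨u, hu⟩ := h
  obtain ⟨k, hk⟩ := u.2
  have hk' : f ^ k = (u : A) := hk
  simp only [one_smul, Submonoid.smul_def, ← hk'] at hu
  have : f ^ k • (x - y) = 0 := by rw [smul_sub, hu, sub_self]
  exact sub_eq_zero.mp (fpow_torsion_free f htf k _ this)

lemma fzpow_apply (j : ℤ) (α : LocalizedModule (Submonoid.powers f) M) :
    fzpow f j α = ((fUnit f ^ j : (Localization (Submonoid.powers f))ˣ) :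
      Localization (Submonoid.powers f)) • α := rfl

lemma fzpow_fzpow (j k : ℤ) (α : LocalizedModule (Submonoid.powers f) M) :
    fzpow f j (fzpow f k α) = fzpow f (j + k) α := by
  simp only [fzpow_apply, smul_smul, ← Units.val_mul, ← zpow_add]

lemma fzpow_zero' (α : LocalizedModule (Submonoid.powers f) M) : fzpow f 0 α = α := by
  simp [fzpow_apply]

lemma fUnit_coe : ((fUnit f : (Localization (Submonoid.powers f))ˣ) :
    Localization (Submonoid.powers f)) = algebraMap A _ f := rfl

lemma fzpow_one' (x : M) :
    fzpow f 1 (mkLinearMap (Submonoid.powers f) M x)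
      = mkLinearMap (Submonoid.powers f) M (f • x) := by
  rw [map_smul]
  rw [fzpow_apply, zpow_one, fUnit_coe, algebraMap_smul]

lemma fzpow_inj (j : ℤ)
    (a b : LocalizedModule (Submonoid.powers f) M) (h : fzpow f j a = fzpow f j b) :
    a = b := by
  have := congrArg (fzpow f (-j)) h
  rwa [fzpow_fzpow, fzpow_fzpow, neg_add_cancel, fzpow_zero', fzpow_zero'] at this

lemma locDiff_mk (d : M →ₗ[A] M) (x : M) :
    locDiff f d (mkLinearMap (Submonoid.powers f) M x)
      = mkLinearMap (Submonoid.powers f) M (d x) := by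
  simp only [mkLinearMap_apply, IsLocalizedModule.mk_eq_mk' (1 : Submonoid.powers f), locDiff,
    IsLocalizedModule.map_mk']

lemma locDiff_smul (d : M →ₗ[A] M) (c : Localization (Submonoid.powers f))
    (α : LocalizedModule (Submonoid.powers f) M) :
    locDiff f d (c • α) = c • locDiff f d α := by
  induction α using LocalizedModule.induction_on with
  | h m s =>
    induction c using Localization.induction_on with
    | H p =>
      obtain ⟨r, t⟩ := p
      have h1 : ∀ m : M, ∀ s : Submonoid.powers f,
          locDiff f d (LocalizedModule.mk m s) = LocalizedModule.mk (d m) s := by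
        intro m s
        rw [IsLocalizedModule.mk_eq_mk', IsLocalizedModule.mk_eq_mk', locDiff,
          IsLocalizedModule.map_mk']
      simp only [LocalizedModule.mk_smul_mk, h1, map_smul]

lemma locDiff_fzpow (d : M →ₗ[A] M) (j : ℤ)
    (α : LocalizedModule (Submonoid.powers f) M) :
    locDiff f d (fzpow f j α) = fzpow f j (locDiff f d α) := by
  rw [fzpow_apply, fzpow_apply, locDiff_smul]


end AuxLemmas

/-- **Bhatt–Morrow–Scholze, décalage and cohomology.** Let `A` be a commutative ring, `f ∈ A`
a non-zero-divisor, and `M•` an `f`-torsion-free cochain complex of `A`-modules (presented as a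
graded module `(M, G)` with differential `d`). For every degree `i`, the assignment sending an
`i`-cocycle `z` to the class of `fⁱ·z` in `H^i(η_f(M•))` is well defined, surjective, and its
kernel consists of those cocycles `z` such that `f·z` is an `i`-coboundary; consequently it
induces an isomorphism `Hⁱ(M•)/Hⁱ(M•)[f] ≅ Hⁱ(η_f(M•))`. -/
theorem eta_cohomology_iso
    {A : Type u} [CommRing A] (f : A) (hf : ∀ a : A, f * a = 0 → a = 0)
    {M : Type u} [AddCommGroup M] [Module A M]
    (d : M →ₗ[A] M) (G : ℤ → Submodule A M)
    (hG : DirectSum.IsInternal G)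
    (hdG : ∀ n : ℤ, (G n).map d ≤ G (n + 1))
    (hdd : d.comp d = 0)
    (htf : ∀ x : M, f • x = 0 → x = 0)
    (i : ℤ) :
    ∃ hmem : ∀ z : ↥(cocycles d G i),
        fzpow f i (mkLinearMap (Submonoid.powers f) M (z : M)) ∈ etaCocycles f d G i,
      Function.Surjective
        (fun z : ↥(cocycles d G i) => etaClass f d G i ⟨_, hmem z⟩) ∧
      (∀ z : ↥(cocycles d G i),
        etaClass f d G i ⟨_, hmem z⟩ = 0 ↔ ∃ w ∈ G (i - 1), d w = f • (z : M)) ∧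
      ∃ e : (cohomology d G i ⧸ fTorsion f d G i) ≃ₗ[A] etaCohomology f d G i,
        ∀ z : ↥(cocycles d G i),
          e (Submodule.Quotient.mk (cls d G i z)) = etaClass f d G i ⟨_, hmem z⟩ := by
  classical
  have hinj := mk_inj f htf
  set ι := mkLinearMap (Submonoid.powers f) M with hι
  have hi1 : i - 1 + 1 = i := by omega
  have hmem : ∀ z : ↥(cocycles d G i),
      fzpow f i (mkLinearMap (Submonoid.powers f) M (z : M)) ∈ etaCocycles f d G i := by
    intro z
    obtain ⟨hzG, hzd⟩ := z.2
    have hdz : d (z : M) = 0 := hzd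
    have hz0 : locDiff f d (fzpow f i (ι (z : M))) = 0 := by
      rw [locDiff_fzpow, locDiff_mk, hdz, map_zero, map_zero]
    refine Submodule.mem_inf.mpr ⟨Submodule.mem_inf.mpr ⟨?_, Submodule.mem_comap.mpr ?_⟩,
      LinearMap.mem_ker.mpr hz0⟩
    · exact Submodule.mem_map.mpr ⟨(z : M), hzG, rfl⟩
    · rw [hz0]; exact Submodule.zero_mem _
  -- kernel characterization at level of etaBoundaries
  have hker : ∀ z : ↥(cocycles d G i),
      (fzpow f i (ι (z : M)) ∈ etaBoundaries f d G i) ↔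
        ∃ w ∈ G (i - 1), d w = f • (z : M) := by
    intro z
    constructor
    · intro h
      obtain ⟨β, hβ, hβeq⟩ := Submodule.mem_map.mp h
      obtain ⟨hβ1, -⟩ := Submodule.mem_inf.mp hβ
      obtain ⟨w, hwG, hweq⟩ := Submodule.mem_map.mp hβ1
      refine ⟨w, hwG, ?_⟩
      apply hinj
      apply fzpow_inj f (i - 1)
      rw [← locDiff_mk, ← locDiff_fzpow]
      rw [show fzpow f (i - 1) (ι w) = β from hweq, hβeq, ← fzpow_one' f,
        fzpow_fzpow, hi1]
    · rintro ⟨w, hwG, hw⟩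
      have key : locDiff f d (fzpow f (i - 1) (ι w)) = fzpow f i (ι (z : M)) := by
        rw [locDiff_fzpow, locDiff_mk, hw, ← fzpow_one' f, fzpow_fzpow, hi1]
      refine Submodule.mem_map.mpr ⟨fzpow f (i - 1) (ι w),
        Submodule.mem_inf.mpr ⟨Submodule.mem_map.mpr ⟨w, hwG, rfl⟩,
          Submodule.mem_comap.mpr ?_⟩, key⟩
      rw [key, hi1]
      exact Submodule.mem_map.mpr ⟨(z : M), z.2.1, rfl⟩
  have hker0 : ∀ z : ↥(cocycles d G i),
      etaClass f d G i ⟨_, hmem z⟩ = 0 ↔ ∃ w ∈ G (i - 1), d w = f • (z : M) := by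
    intro z
    rw [etaClass]
    exact (Submodule.Quotient.mk_eq_zero _).trans (hker z)
  have hsurj : Function.Surjective
      (fun z : ↥(cocycles d G i) => etaClass f d G i ⟨_, hmem z⟩) := by
    intro c
    obtain ⟨a, rfl⟩ := Submodule.Quotient.mk_surjective
      ((etaBoundaries f d G i).comap (etaCocycles f d G i).subtype) c
    obtain ⟨ha1, ha2⟩ := Submodule.mem_inf.mp a.2
    obtain ⟨ha11, -⟩ := Submodule.mem_inf.mp ha1
    obtain ⟨x, hxG, hx⟩ := Submodule.mem_map.mp ha11
    have hld : locDiff f d a.1 = 0 := LinearMap.mem_ker.mp ha2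
    have hax : fzpow f i (ι x) = a.1 := hx
    have hdx : d x = 0 := by
      apply hinj
      rw [map_zero]
      apply fzpow_inj f i
      rw [← locDiff_mk, ← locDiff_fzpow, hax, map_zero, hld]
    refine ⟨⟨x, hxG, hdx⟩, ?_⟩
    show Submodule.Quotient.mk _ = Submodule.Quotient.mk a
    congr 1
    exact Subtype.ext hax
  refine ⟨hmem, hsurj, hker0, ?_⟩
  -- linear map from cocycles to eta-cohomology
  let toEta : ↥(cocycles d G i) →ₗ[A] ↥(etaCocycles f d G i) :=
    { toFun := fun z => ⟨fzpow f i (ι (z : M)), hmem z⟩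
      map_add' := fun a b => Subtype.ext (by simp)
      map_smul' := fun a z => Subtype.ext (by simp) }
  let Ψ : ↥(cocycles d G i) →ₗ[A] etaCohomology f d G i :=
    ((etaBoundaries f d G i).comap (etaCocycles f d G i).subtype).mkQ.comp toEta
  have hΨ : ∀ z, Ψ z = etaClass f d G i ⟨_, hmem z⟩ := fun z => rfl
  have hle : (boundaries d G i).comap (cocycles d G i).subtype ≤ LinearMap.ker Ψ := by
    intro z hz
    rw [LinearMap.mem_ker, hΨ, hker0]
    obtain ⟨w, hwG, hw⟩ := Submodule.mem_map.mp (Submodule.mem_comap.mp hz)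
    exact ⟨f • w, Submodule.smul_mem _ f hwG, by rw [map_smul, hw]; rfl⟩
  let Φ : cohomology d G i →ₗ[A] etaCohomology f d G i :=
    Submodule.liftQ _ Ψ hle
  have hΦ : ∀ z : ↥(cocycles d G i),
      Φ (cls d G i z) = etaClass f d G i ⟨_, hmem z⟩ := fun z => rfl
  have hkerΦ : LinearMap.ker Φ = fTorsion f d G i := by
    ext x
    obtain ⟨z, rfl⟩ := Submodule.Quotient.mk_surjective _ x
    have h1 : (Submodule.Quotient.mk z ∈ LinearMap.ker Φ) ↔
        ∃ w ∈ G (i - 1), d w = f • (z : M) := hker0 z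
    have h2 : (Submodule.Quotient.mk z ∈ fTorsion f d G i) ↔
        ∃ w ∈ G (i - 1), d w = f • (z : M) := by
      refine Iff.trans (show _ ↔ (Submodule.Quotient.mk (f • z) :
          ↥(cocycles d G i) ⧸ (boundaries d G i).comap (cocycles d G i).subtype) = 0
          from Iff.rfl) ?_
      rw [Submodule.Quotient.mk_eq_zero, Submodule.mem_comap]
      simp only [Submodule.subtype_apply, SetLike.val_smul, boundaries, Submodule.mem_map]
    exact h1.trans h2.symm
  have hΦsurj : Function.Surjective Φ := by
    intro c
    obtain ⟨z, hz⟩ := hsurj c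
    exact ⟨cls d G i z, by rw [hΦ]; exact hz⟩
  let Φbar : (cohomology d G i ⧸ fTorsion f d G i) →ₗ[A] etaCohomology f d G i :=
    Submodule.liftQ _ Φ (le_of_eq hkerΦ.symm)
  have hbij : Function.Bijective Φbar := by
    constructor
    · rw [← LinearMap.ker_eq_bot]
      exact Submodule.ker_liftQ_eq_bot _ _ _ (le_of_eq hkerΦ)
    · intro c
      obtain ⟨x, hx⟩ := hΦsurj c
      exact ⟨Submodule.Quotient.mk x, by rw [Submodule.liftQ_apply]; exact hx⟩
  refine ⟨LinearEquiv.ofBijective Φbar hbij, fun z => ?_⟩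
  show Φbar (Submodule.Quotient.mk (cls d G i z)) = _
  rw [Submodule.liftQ_apply, hΦ]
end
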